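/- arXiv:1805.04395 — 3 statements merged into one kernel-verified Lean document; each statement's English description precedes it below -/
import Mathlib

section
/- Let α : ℝ → ℝ be admissible. Then there exists a map F : ℝ² → ℝ² such that F(1 − r·cos θ, r·sin θ) = (1 − r·cos(α(θ)), r·sin(α(θ))) for all r ≥ 0 and θ ∈ [0, π/2], and: (i) F restricts to a bijection from the closed sector S := {(x, y) : x ≤ 1, y ≥ 0} onto the closed upper half-plane {(x, y) : y ≥ 0}, continuous with continuous inverse; (ii) F is C^∞ on S ∖ {(1, 0)} and the inverse is C^∞ on {(x, y) : y ≥ 0} ∖ {(1, 0)} (in the sense of ContDiffOn); (iii) F(p) = p for every p = (x, y) ∈ S with y ≤ tan(π/6)·(1 − x); (iv) F(x, y) = (1 + y, 1 − x) for every (x, y) ∈ S with y ≥ tan(π/3)·(1 − x). -/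
open Real Set

/-- A `C^∞` function `α : ℝ → ℝ` is *admissible* if its derivative is strictly
positive on `[0, π/2]`, `α t = t` on `[0, π/6]`, and `α t = t + π/2` on
`[π/3, π/2]`. -/
def Admissible (α : ℝ → ℝ) : Prop :=
  ContDiff ℝ (⊤ : ℕ∞) α ∧
    (∀ t ∈ Icc 0 (π / 2), 0 < deriv α t) ∧
    (∀ t ∈ Icc 0 (π / 6), α t = t) ∧
    (∀ t ∈ Icc (π / 3) (π / 2), α t = t + π / 2)

/-- The closed sector `{(x, y) | x ≤ 1, 0 ≤ y}` based at `(1, 0)`. -/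
def sector : Set (ℝ × ℝ) := {p : ℝ × ℝ | p.1 ≤ 1 ∧ 0 ≤ p.2}

/-- The closed upper half-plane `{(x, y) | 0 ≤ y}`. -/
def upperHalfPlane : Set (ℝ × ℝ) := {p : ℝ × ℝ | 0 ≤ p.2}

namespace CornerStraighten

/-! ### The global angle reparametrization `beta` and its inverse `gamma` -/

/-- Extension of `α` to a diffeomorphism of `ℝ`. -/
noncomputable def beta (α : ℝ → ℝ) (t : ℝ) : ℝ :=
  if t ≤ 0 then t else if π / 2 ≤ t then t + π / 2 else α t

variable {α : ℝ → ℝ}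

theorem beta_eq_of_le (hα : Admissible α) {t : ℝ} (ht : t ≤ π / 6) : beta α t = t := by
  unfold beta
  split_ifs with h1 h2
  · rfl
  · exfalso; have := pi_pos; linarith
  · exact hα.2.2.1 t ⟨by linarith, ht⟩

theorem beta_eq_alpha (hα : Admissible α) {t : ℝ} (h0 : 0 ≤ t) (h2 : t ≤ π / 2) :
    beta α t = α t := by
  unfold beta
  split_ifs with h1 h2'
  · have ht : t = 0 := le_antisymm h1 h0
    subst ht
    exact (hα.2.2.1 0 ⟨le_rfl, by positivity⟩).symm
  · have ht : t = π / 2 := le_antisymm h2 h2'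
    subst ht
    exact (hα.2.2.2 (π / 2) ⟨by linarith [pi_pos], le_rfl⟩).symm
  · rfl

theorem beta_shift (hα : Admissible α) {t : ℝ} (ht : π / 3 ≤ t) : beta α t = t + π / 2 := by
  unfold beta
  split_ifs with h1 h2
  · exfalso; have := pi_pos; linarith
  · rfl
  · exact hα.2.2.2 t ⟨ht, le_of_not_ge h2⟩

theorem contDiff_beta (hα : Admissible α) : ContDiff ℝ (⊤ : ℕ∞) (beta α) := by
  rw [contDiff_iff_contDiffAt]
  intro t
  have hπ := pi_pos
  by_cases ht1 : t < π / 6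
  · refine ContDiffAt.congr_of_eventuallyEq contDiffAt_id ?_
    filter_upwards [Iio_mem_nhds ht1] with s hs
    exact beta_eq_of_le hα (le_of_lt hs)
  · by_cases ht2 : t < π / 2
    · refine ContDiffAt.congr_of_eventuallyEq (hα.1.contDiffAt) ?_
      filter_upwards [Ioo_mem_nhds (show (0:ℝ) < t by push_neg at ht1; linarith) ht2] with s hs
      exact beta_eq_alpha hα hs.1.le hs.2.le
    · refine ContDiffAt.congr_of_eventuallyEq
        ((contDiff_id.add contDiff_const :
          ContDiff ℝ (⊤ : ℕ∞) (fun s : ℝ => s + π / 2)).contDiffAt) ?_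
      filter_upwards [Ioi_mem_nhds (show π / 3 < t by push_neg at ht2; linarith)] with s hs
      exact beta_shift hα hs.le

theorem deriv_beta_pos (hα : Admissible α) (t : ℝ) : 0 < deriv (beta α) t := by
  have hπ := pi_pos
  by_cases ht1 : t < π / 6
  · have hev : beta α =ᶠ[nhds t] (fun s => s) := by
      filter_upwards [Iio_mem_nhds ht1] with s hs
      exact beta_eq_of_le hα (le_of_lt hs)
    rw [hev.deriv_eq]
    simp
  · by_cases ht2 : t < π / 2
    · have hev : beta α =ᶠ[nhds t] α := by
        filter_upwards [Ioo_mem_nhds (show (0:ℝ) < t by push_neg at ht1; linarith) ht2] with s hs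
        exact beta_eq_alpha hα hs.1.le hs.2.le
      rw [hev.deriv_eq]
      exact hα.2.1 t ⟨by push_neg at ht1; linarith, ht2.le⟩
    · have hev : beta α =ᶠ[nhds t] (fun s => s + π / 2) := by
        filter_upwards [Ioi_mem_nhds (show π / 3 < t by push_neg at ht2; linarith)] with s hs
        exact beta_shift hα hs.le
      rw [hev.deriv_eq]
      simp [deriv_add_const]

theorem strictMono_beta (hα : Admissible α) : StrictMono (beta α) :=
  strictMono_of_deriv_pos (deriv_beta_pos hα)

theorem surjective_beta (hα : Admissible α) : Function.Surjective (beta α) := by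
  refine Continuous.surjective ((contDiff_beta hα).continuous) ?_ ?_
  · refine Filter.Tendsto.congr' ?_
      (Filter.tendsto_atTop_add_const_right Filter.atTop (π / 2) Filter.tendsto_id)
    filter_upwards [Filter.Ioi_mem_atTop (π / 3)] with t ht
    exact (beta_shift hα ht.le).symm
  · refine Filter.Tendsto.congr' ?_ Filter.tendsto_id
    filter_upwards [Filter.Iio_mem_atBot (π / 6)] with t ht
    exact (beta_eq_of_le hα ht.le).symm

/-- Inverse of `beta`. -/
noncomputable def gamma (α : ℝ → ℝ) : ℝ → ℝ := Function.invFun (beta α)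

theorem gamma_beta (hα : Admissible α) (t : ℝ) : gamma α (beta α t) = t :=
  Function.leftInverse_invFun (strictMono_beta hα).injective t

theorem beta_gamma (hα : Admissible α) (y : ℝ) : beta α (gamma α y) = y :=
  Function.rightInverse_invFun (surjective_beta hα) y

theorem strictMono_gamma (hα : Admissible α) : StrictMono (gamma α) := by
  intro a b hab
  have h := (strictMono_beta hα).lt_iff_lt (a := gamma α a) (b := gamma α b)
  rw [beta_gamma hα, beta_gamma hα] at h
  exact h.mp hab

theorem beta_zero (hα : Admissible α) : beta α 0 = 0 := by
  rw [beta_eq_of_le hα (by positivity)]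

theorem beta_pi_div_two (hα : Admissible α) : beta α (π / 2) = π := by
  rw [beta_shift hα (by linarith [pi_pos])]; ring

theorem gamma_zero (hα : Admissible α) : gamma α 0 = 0 := by
  conv_lhs => rw [← beta_zero hα]
  exact gamma_beta hα 0

theorem gamma_pi (hα : Admissible α) : gamma α π = π / 2 := by
  conv_lhs => rw [← beta_pi_div_two hα]
  exact gamma_beta hα (π / 2)

theorem gamma_eq_of_le (hα : Admissible α) {y : ℝ} (hy : y ≤ π / 6) : gamma α y = y := by
  conv_lhs => rw [← beta_eq_of_le hα hy]
  exact gamma_beta hα y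

theorem gamma_shift (hα : Admissible α) {y : ℝ} (hy : 5 * π / 6 ≤ y) :
    gamma α y = y - π / 2 := by
  have h : beta α (y - π / 2) = y := by
    rw [beta_shift hα (by linarith)]; ring
  conv_lhs => rw [← h]
  exact gamma_beta hα (y - π / 2)

theorem beta_mem (hα : Admissible α) {t : ℝ} (ht : t ∈ Icc 0 (π / 2)) :
    beta α t ∈ Icc 0 π := by
  constructor
  · rw [← beta_zero hα]; exact (strictMono_beta hα).monotone ht.1
  · rw [← beta_pi_div_two hα]; exact (strictMono_beta hα).monotone ht.2

theorem gamma_mem (hα : Admissible α) {y : ℝ} (hy : y ∈ Icc 0 π) :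
    gamma α y ∈ Icc 0 (π / 2) := by
  constructor
  · rw [← gamma_zero hα]; exact (strictMono_gamma hα).monotone hy.1
  · rw [← gamma_pi hα]; exact (strictMono_gamma hα).monotone hy.2

theorem contDiffAt_gamma (hα : Admissible α) (y : ℝ) :
    ContDiffAt ℝ (⊤ : ℕ∞) (gamma α) y := by
  obtain ⟨t, rfl⟩ := surjective_beta hα y
  have hc : 0 < deriv (beta α) t := deriv_beta_pos hα t
  have hf : ContDiffAt ℝ (⊤ : ℕ∞) (beta α) t := (contDiff_beta hα).contDiffAt
  set e : ℝ ≃L[ℝ] ℝ := ContinuousLinearEquiv.unitsEquivAut ℝ (Units.mk0 _ hc.ne') with he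
  have hf' : HasFDerivAt (beta α) (e : ℝ →L[ℝ] ℝ) t := by
    have h1 : HasDerivAt (beta α) (deriv (beta α) t) t :=
      (hf.differentiableAt (by simp)).hasDerivAt
    rw [hasDerivAt_iff_hasFDerivAt] at h1
    have h2 : (e : ℝ →L[ℝ] ℝ) =
        ContinuousLinearMap.smulRight (1 : ℝ →L[ℝ] ℝ) (deriv (beta α) t) := by
      refine ContinuousLinearMap.ext fun x => ?_
      simp [he, ContinuousLinearEquiv.unitsEquivAut_apply, mul_comm]
    rw [h2]
    exact h1
  have hn : ((⊤ : ℕ∞) : WithTop ℕ∞) ≠ 0 := by simp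
  have hloc : ContDiffAt ℝ (⊤ : ℕ∞) (hf.localInverse hf' hn) (beta α t) :=
    hf.to_localInverse hf' hn
  refine hloc.congr_of_eventuallyEq ?_
  have hev : ∀ᶠ y' in nhds (beta α t), beta α (hf.localInverse hf' hn y') = y' :=
    (hf.hasStrictFDerivAt' hf' hn).eventually_right_inverse
  filter_upwards [hev] with y' hy'
  conv_lhs => rw [← hy']
  exact gamma_beta hα _

/-! ### The complex-coordinate model -/

/-- The complex coordinate about the corner `(1, 0)`. -/
noncomputable def cplx (p : ℝ × ℝ) : ℂ :=
  Complex.ofReal (1 - p.1) + Complex.ofReal p.2 * Complex.I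

@[simp] theorem cplx_re (p : ℝ × ℝ) : (cplx p).re = 1 - p.1 := by simp [cplx]

@[simp] theorem cplx_im (p : ℝ × ℝ) : (cplx p).im = p.2 := by simp [cplx]

theorem cplx_eq_zero {p : ℝ × ℝ} : cplx p = 0 ↔ p = ((1 : ℝ), (0 : ℝ)) := by
  rw [Complex.ext_iff, Prod.ext_iff]
  simp only [cplx_re, cplx_im, Complex.zero_re, Complex.zero_im]
  constructor
  · rintro ⟨h1, h2⟩; exact ⟨by linarith, h2⟩
  · rintro ⟨h1, h2⟩; exact ⟨by linarith, h2⟩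

theorem contDiff_cplx : ContDiff ℝ (⊤ : ℕ∞) cplx := by
  unfold cplx
  exact (Complex.ofRealCLM.contDiff.comp (contDiff_const.sub contDiff_fst)).add
    ((Complex.ofRealCLM.contDiff.comp contDiff_snd).mul contDiff_const)

/-- The angular rescaling map in complex coordinates. -/
noncomputable def Phi (f : ℝ → ℝ) (z : ℂ) : ℂ :=
  (‖z‖ : ℂ) * Complex.exp ((f z.arg : ℂ) * Complex.I)

/-- The generic straightening map determined by an angle reparametrization `f`. -/
noncomputable def Fgen (f : ℝ → ℝ) (p : ℝ × ℝ) : ℝ × ℝ :=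
  (1 - (Phi f (cplx p)).re, (Phi f (cplx p)).im)

theorem Phi_re (f : ℝ → ℝ) (z : ℂ) : (Phi f z).re = ‖z‖ * Real.cos (f z.arg) := by
  rw [Phi, Complex.exp_mul_I, ← Complex.ofReal_cos, ← Complex.ofReal_sin,
    Complex.re_ofReal_mul]
  simp [Complex.cos_ofReal_re, Complex.sin_ofReal_re]

theorem Phi_im (f : ℝ → ℝ) (z : ℂ) : (Phi f z).im = ‖z‖ * Real.sin (f z.arg) := by
  rw [Phi, Complex.exp_mul_I, ← Complex.ofReal_cos, ← Complex.ofReal_sin,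
    Complex.im_ofReal_mul]
  simp [Complex.cos_ofReal_re, Complex.sin_ofReal_re]

theorem Fgen_eq (f : ℝ → ℝ) (p : ℝ × ℝ) :
    Fgen f p = (1 - ‖cplx p‖ * Real.cos (f (cplx p).arg),
      ‖cplx p‖ * Real.sin (f (cplx p).arg)) := by
  rw [Fgen, Phi_re, Phi_im]

theorem norm_Phi (f : ℝ → ℝ) (z : ℂ) : ‖Phi f z‖ = ‖z‖ := by
  rw [Phi, norm_mul]
  simp [Complex.norm_exp_ofReal_mul_I]

theorem Phi_zero (f : ℝ → ℝ) : Phi f 0 = 0 := by simp [Phi]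

theorem Fgen_corner (f : ℝ → ℝ) : Fgen f ((1 : ℝ), (0 : ℝ)) = ((1 : ℝ), (0 : ℝ)) := by
  have h : cplx ((1 : ℝ), (0 : ℝ)) = 0 := cplx_eq_zero.mpr rfl
  rw [Fgen, h, Phi_zero]
  simp

theorem arg_Phi (f : ℝ → ℝ) {z : ℂ} (hz : z ≠ 0) (h : f z.arg ∈ Icc 0 π) :
    (Phi f z).arg = f z.arg := by
  have hπ := pi_pos
  have habs : (0 : ℝ) < ‖z‖ := norm_pos_iff.mpr hz
  have hrw : Phi f z = (‖z‖ : ℂ) *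
      (Complex.cos (f z.arg : ℂ) + Complex.sin (f z.arg : ℂ) * Complex.I) := by
    rw [Phi, Complex.exp_mul_I]
  rw [hrw]
  exact Complex.arg_mul_cos_add_sin_mul_I habs ⟨by linarith [h.1], h.2⟩

theorem Phi_Phi (g f : ℝ → ℝ) {z : ℂ} (hz : z ≠ 0) (hf : f z.arg ∈ Icc 0 π)
    (hgf : g (f z.arg) = z.arg) : Phi g (Phi f z) = z := by
  rw [Phi, norm_Phi, arg_Phi f hz hf, hgf]
  exact Complex.norm_mul_exp_arg_mul_I z

theorem cplx_Fgen (f : ℝ → ℝ) (p : ℝ × ℝ) : cplx (Fgen f p) = Phi f (cplx p) := by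
  rw [Fgen, cplx]
  simp only
  rw [show (1 : ℝ) - (1 - (Phi f (cplx p)).re) = (Phi f (cplx p)).re by ring]
  exact Complex.re_add_im _

theorem Fgen_Fgen (g f : ℝ → ℝ) {p : ℝ × ℝ} (hz : cplx p ≠ 0)
    (hf : f (cplx p).arg ∈ Icc 0 π) (hgf : g (f (cplx p).arg) = (cplx p).arg) :
    Fgen g (Fgen f p) = p := by
  obtain ⟨p1, p2⟩ := p
  rw [Fgen, cplx_Fgen, Phi_Phi g f hz hf hgf]
  simp

/-! ### Continuity and smoothness of `Fgen` -/

theorem continuousAt_Fgen_corner (f : ℝ → ℝ) :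
    ContinuousAt (Fgen f) ((1 : ℝ), (0 : ℝ)) := by
  have hcplx : Continuous cplx := contDiff_cplx.continuous
  have h0 : cplx ((1 : ℝ), (0 : ℝ)) = 0 := cplx_eq_zero.mpr rfl
  have hnorm : Filter.Tendsto (fun p => ‖cplx p‖) (nhds ((1 : ℝ), (0 : ℝ))) (nhds 0) := by
    have := (hcplx.tendsto ((1 : ℝ), (0 : ℝ))).norm
    rwa [h0, norm_zero] at this
  have hΦ : Filter.Tendsto (fun p => Phi f (cplx p)) (nhds ((1 : ℝ), (0 : ℝ)))
      (nhds 0) := by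
    refine squeeze_zero_norm (fun p => ?_) hnorm
    rw [norm_Phi]
  have h1 : Filter.Tendsto (fun p => 1 - (Phi f (cplx p)).re)
      (nhds ((1 : ℝ), (0 : ℝ))) (nhds 1) := by
    have := (Complex.continuous_re.tendsto 0).comp hΦ
    simpa using tendsto_const_nhds.sub this
  have h2 : Filter.Tendsto (fun p => (Phi f (cplx p)).im)
      (nhds ((1 : ℝ), (0 : ℝ))) (nhds 0) := by
    have := (Complex.continuous_im.tendsto 0).comp hΦ
    exact this
  have : Filter.Tendsto (Fgen f) (nhds ((1 : ℝ), (0 : ℝ))) (nhds ((1 : ℝ), (0 : ℝ))) := by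
    rw [show ((1 : ℝ), (0 : ℝ)) = ((1 : ℝ), (0 : ℝ)) from rfl]
    exact h1.prodMk_nhds h2
  rw [ContinuousAt, Fgen_corner]
  exact this

theorem contDiffAt_Fgen {f : ℝ → ℝ} (hf : ∀ x, ContDiffAt ℝ (⊤ : ℕ∞) f x) {p : ℝ × ℝ}
    (hp : cplx p ∈ Complex.slitPlane) : ContDiffAt ℝ (⊤ : ℕ∞) (Fgen f) p := by
  have hz : cplx p ≠ 0 := Complex.slitPlane_ne_zero hp
  have hcplx : ContDiffAt ℝ (⊤ : ℕ∞) cplx p := contDiff_cplx.contDiffAt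
  have harg : ContDiffAt ℝ (⊤ : ℕ∞) Complex.arg (cplx p) := by
    have hlog : ContDiffAt ℝ (⊤ : ℕ∞) Complex.log (cplx p) :=
      (Complex.contDiffAt_log hp).restrict_scalars ℝ
    have him : ContDiffAt ℝ (⊤ : ℕ∞) (fun z : ℂ => (Complex.log z).im) (cplx p) :=
      Complex.imCLM.contDiff.contDiffAt.comp _ hlog
    refine him.congr_of_eventuallyEq ?_
    exact Filter.Eventually.of_forall fun z => (Complex.log_im z).symm
  have hnorm : ContDiffAt ℝ (⊤ : ℕ∞) (fun z : ℂ => ‖z‖) (cplx p) := contDiffAt_norm ℂ hz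
  have hPhi : ContDiffAt ℝ (⊤ : ℕ∞) (Phi f) (cplx p) := by
    have hinner : ContDiffAt ℝ (⊤ : ℕ∞)
        (fun z : ℂ => ((f z.arg : ℝ) : ℂ) * Complex.I) (cplx p) :=
      (Complex.ofRealCLM.contDiff.contDiffAt.comp _ ((hf _).comp _ harg)).mul
        contDiffAt_const
    have hexp : ContDiffAt ℝ (⊤ : ℕ∞) Complex.exp
        (((f (cplx p).arg : ℝ) : ℂ) * Complex.I) :=
      (Complex.contDiff_exp (𝕜 := ℂ)).contDiffAt.restrict_scalars ℝ
    exact ContDiffAt.mul (Complex.ofRealCLM.contDiff.contDiffAt.comp _ hnorm)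
      (ContDiffAt.comp (g := Complex.exp)
        (f := fun z : ℂ => ((f z.arg : ℝ) : ℂ) * Complex.I) (cplx p) hexp hinner)
  have hcomp : ContDiffAt ℝ (⊤ : ℕ∞) (fun q => Phi f (cplx q)) p := hPhi.comp p hcplx
  exact ContDiffAt.prodMk (contDiffAt_const.sub (Complex.reCLM.contDiff.contDiffAt.comp p hcomp))
    (Complex.imCLM.contDiff.contDiffAt.comp p hcomp)

/-! ### Facts about arguments of sector points -/

theorem arg_mem_sector {p : ℝ × ℝ} (hp : p ∈ sector) : (cplx p).arg ∈ Icc 0 (π / 2) := by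
  constructor
  · exact Complex.arg_nonneg_iff.mpr (by rw [cplx_im]; exact hp.2)
  · exact Complex.arg_le_pi_div_two_iff.mpr (Or.inl (by rw [cplx_re]; linarith [hp.1]))

theorem arg_mem_uhp {q : ℝ × ℝ} (hq : q ∈ upperHalfPlane) : (cplx q).arg ∈ Icc 0 π :=
  ⟨Complex.arg_nonneg_iff.mpr (by rw [cplx_im]; exact hq), Complex.arg_le_pi _⟩

theorem slit_of_sector {p : ℝ × ℝ} (hp : p ∈ sector) (hne : p ≠ ((1 : ℝ), (0 : ℝ))) :
    cplx p ∈ Complex.slitPlane := by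
  have hz : cplx p ≠ 0 := fun h => hne (cplx_eq_zero.mp h)
  rcases lt_or_eq_of_le (show (0 : ℝ) ≤ (cplx p).re by rw [cplx_re]; linarith [hp.1]) with h | h
  · exact Or.inl h
  · refine Or.inr fun him => hz ?_
    rw [Complex.ext_iff]
    exact ⟨h.symm, him⟩

theorem norm_mul_cos (z : ℂ) : ‖z‖ * Real.cos z.arg = z.re := by
  exact Complex.norm_mul_cos_arg z

theorem norm_mul_sin (z : ℂ) : ‖z‖ * Real.sin z.arg = z.im := by
  exact Complex.norm_mul_sin_arg z

theorem fgen_gamma_rot (hα : Admissible α) {x : ℝ × ℝ} (hx1 : 1 < x.1)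
    (hx2lt : x.2 < Real.tan (π / 6) * (x.1 - 1)) (hx2 : 0 ≤ x.2) :
    Fgen (gamma α) x = (1 - x.2, x.1 - 1) := by
  have hπ := pi_pos
  have hre : (cplx x).re < 0 := by rw [cplx_re]; linarith
  have him : 0 ≤ (cplx x).im := by rw [cplx_im]; exact hx2
  have hu0 : cplx x ≠ 0 := fun h => by rw [h] at hre; simp at hre
  have harg_le : (cplx x).arg ≤ π := Complex.arg_le_pi _
  have harg_gt_half : π / 2 < (cplx x).arg := by
    by_contra h
    push_neg at h
    rcases Complex.arg_le_pi_div_two_iff.mp h with h' | h'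
    · linarith
    · linarith
  have htanpos : 0 < Real.tan (π / 6) :=
    Real.tan_pos_of_pos_of_lt_pi_div_two (by positivity) (by linarith)
  have harg : 5 * π / 6 ≤ (cplx x).arg := by
    by_contra hlt
    push_neg at hlt
    have htan1 : Real.tan ((cplx x).arg - π) = Real.tan (cplx x).arg :=
      Real.tan_periodic.sub_eq (cplx x).arg
    have hmem1 : (cplx x).arg - π ∈ Ioo (-(π / 2)) (π / 2) := ⟨by linarith, by linarith⟩
    have hmem2 : -(π / 6) ∈ Ioo (-(π / 2)) (π / 2) := ⟨by linarith, by linarith⟩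
    have h3 : Real.tan ((cplx x).arg - π) ≤ Real.tan (-(π / 6)) :=
      Real.strictMonoOn_tan.monotoneOn hmem1 hmem2 (by linarith)
    rw [htan1, Real.tan_neg] at h3
    have htanarg : Real.tan (cplx x).arg = (cplx x).im / (cplx x).re := Complex.tan_arg _
    have hdiv : -Real.tan (π / 6) < (cplx x).im / (cplx x).re := by
      rw [lt_div_iff_of_neg hre]
      have heq : -Real.tan (π / 6) * (cplx x).re = Real.tan (π / 6) * (x.1 - 1) := by
        rw [cplx_re]; ring
      rw [heq, cplx_im]
      exact hx2lt
    rw [htanarg] at h3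
    linarith
  have hg : gamma α (cplx x).arg = (cplx x).arg - π / 2 := gamma_shift hα harg
  rw [Fgen_eq, hg, Real.cos_sub_pi_div_two, Real.sin_sub_pi_div_two]
  simp only [Prod.mk.injEq]
  constructor
  · rw [norm_mul_sin, cplx_im]
  · rw [mul_neg, norm_mul_cos, cplx_re]; ring

theorem contDiffWithinAt_G (hα : Admissible α) {q : ℝ × ℝ} (hq : q ∈ upperHalfPlane)
    (hqc : q ≠ ((1 : ℝ), (0 : ℝ))) :
    ContDiffWithinAt ℝ (⊤ : ℕ∞) (Fgen (gamma α)) upperHalfPlane q := by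
  have hπ := pi_pos
  by_cases hslit : cplx q ∈ Complex.slitPlane
  · exact (contDiffAt_Fgen (contDiffAt_gamma hα) hslit).contDiffWithinAt
  · have hz : cplx q ≠ 0 := fun h => hqc (cplx_eq_zero.mp h)
    rw [Complex.mem_slitPlane_iff] at hslit
    push_neg at hslit
    obtain ⟨hre_le, him0⟩ := hslit
    have hre : (cplx q).re < 0 :=
      lt_of_le_of_ne hre_le (fun h => hz (Complex.ext h him0))
    have hq1 : 1 < q.1 := by rw [cplx_re] at hre; linarith
    have hq2 : q.2 = 0 := by rw [← cplx_im q]; exact him0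
    have htanpos : 0 < Real.tan (π / 6) :=
      Real.tan_pos_of_pos_of_lt_pi_div_two (by positivity) (by linarith)
    have hVopen : IsOpen ({x : ℝ × ℝ | 1 < x.1} ∩
        {x : ℝ × ℝ | x.2 < Real.tan (π / 6) * (x.1 - 1)}) :=
      (isOpen_lt continuous_const continuous_fst).inter
        (isOpen_lt continuous_snd (continuous_const.mul (continuous_fst.sub continuous_const)))
    have hqV : q ∈ {x : ℝ × ℝ | 1 < x.1} ∩
        {x : ℝ × ℝ | x.2 < Real.tan (π / 6) * (x.1 - 1)} := by
      refine ⟨hq1, ?_⟩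
      simp only [mem_setOf_eq]
      rw [hq2]
      exact mul_pos htanpos (by linarith)
    refine ContDiffWithinAt.congr_of_eventuallyEq
      (f := fun x : ℝ × ℝ => ((1 : ℝ) - x.2, x.1 - 1))
      ((ContDiff.prodMk (contDiff_const.sub contDiff_snd)
        (contDiff_fst.sub contDiff_const)).contDiffAt.contDiffWithinAt) ?_ ?_
    · filter_upwards [mem_nhdsWithin_of_mem_nhds (hVopen.mem_nhds hqV),
        self_mem_nhdsWithin] with x hxV hxU
      exact fgen_gamma_rot hα hxV.1 hxV.2 hxU
    · exact fgen_gamma_rot hα hqV.1 hqV.2 hq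

end CornerStraighten

open CornerStraighten

/-- The local model for straightening the corner: for any admissible `α` there
is a map `F` preserving the radial coordinate about `(1, 0)` and rescaling the
angle by `α`, which is a homeomorphism from the closed sector onto the closed
upper half-plane, a diffeomorphism away from `(1, 0)` (in the sense of
`ContDiffOn`), agrees with the identity on the subsector of angles `≤ π/6`, and
agrees with the clockwise rotation by `π/2` about `(1, 0)` on the subsector of
angles `≥ π/3`. -/
theorem exists_local_corner_straightening_model (α : ℝ → ℝ) (hα : Admissible α) :
    ∃ F : ℝ × ℝ → ℝ × ℝ,
      (∀ r θ : ℝ, 0 ≤ r → θ ∈ Icc 0 (π / 2) →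
        F (1 - r * cos θ, r * sin θ) = (1 - r * cos (α θ), r * sin (α θ))) ∧
      BijOn F sector upperHalfPlane ∧
      ContinuousOn F sector ∧
      (∃ G : ℝ × ℝ → ℝ × ℝ,
        InvOn G F sector upperHalfPlane ∧
        ContinuousOn G upperHalfPlane ∧
        ContDiffOn ℝ (⊤ : ℕ∞) G (upperHalfPlane \ {((1 : ℝ), (0 : ℝ))})) ∧
      ContDiffOn ℝ (⊤ : ℕ∞) F (sector \ {((1 : ℝ), (0 : ℝ))}) ∧
      (∀ p ∈ sector, p.2 ≤ Real.tan (π / 6) * (1 - p.1) → F p = p) ∧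
      (∀ p ∈ sector, Real.tan (π / 3) * (1 - p.1) ≤ p.2 →
        F p = (1 + p.2, 1 - p.1)) := by
  have hπ := pi_pos
  refine ⟨Fgen (beta α), ?_, ?_, ?_, ?_, ?_, ?_, ?_⟩
  · -- polar formula
    intro r θ hr hθ
    rcases eq_or_lt_of_le hr with hr0 | hr0
    · subst hr0
      simp only [zero_mul, sub_zero, mul_zero]
      exact Fgen_corner _
    · have hz : cplx (1 - r * cos θ, r * sin θ) =
          (r : ℂ) * (Complex.cos (θ : ℂ) + Complex.sin (θ : ℂ) * Complex.I) := by
        simp only [cplx, cplx_re, cplx_im]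
        rw [← Complex.ofReal_cos, ← Complex.ofReal_sin]
        push_cast
        ring
      have harg : (cplx (1 - r * cos θ, r * sin θ)).arg = θ := by
        rw [hz]
        exact Complex.arg_mul_cos_add_sin_mul_I hr0 ⟨by linarith [hθ.1], by linarith [hθ.2]⟩
      have habs : ‖cplx (1 - r * cos θ, r * sin θ)‖ = r := by
        rw [hz, norm_mul, Complex.norm_real, Complex.norm_cos_add_sin_mul_I, mul_one,
          Real.norm_eq_abs, abs_of_pos hr0]
      rw [Fgen_eq, habs, harg, beta_eq_alpha hα hθ.1 hθ.2]
  · -- BijOn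
    have hMapsF : MapsTo (Fgen (beta α)) sector upperHalfPlane := fun p hp => by
      rw [upperHalfPlane, Set.mem_setOf_eq, Fgen_eq]
      have hb := beta_mem hα (arg_mem_sector hp)
      exact mul_nonneg (norm_nonneg _) (Real.sin_nonneg_of_nonneg_of_le_pi hb.1 hb.2)
    have hMapsG : MapsTo (Fgen (gamma α)) upperHalfPlane sector := fun q hq => by
      rw [sector, Set.mem_setOf_eq, Fgen_eq]
      have hg := gamma_mem hα (arg_mem_uhp hq)
      constructor
      · have : 0 ≤ ‖cplx q‖ * Real.cos (gamma α (cplx q).arg) :=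
          mul_nonneg (norm_nonneg _)
            (Real.cos_nonneg_of_mem_Icc ⟨by linarith [hg.1], hg.2⟩)
        simp only
        linarith
      · exact mul_nonneg (norm_nonneg _)
          (Real.sin_nonneg_of_nonneg_of_le_pi hg.1 (by linarith [hg.2]))
    have hInv : InvOn (Fgen (gamma α)) (Fgen (beta α)) sector upperHalfPlane := by
      constructor
      · intro p hp
        by_cases hz : cplx p = 0
        · have hp0 := cplx_eq_zero.mp hz
          rw [hp0, Fgen_corner, Fgen_corner]
        · exact Fgen_Fgen (gamma α) (beta α) hz (beta_mem hα (arg_mem_sector hp))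
            (gamma_beta hα _)
      · intro q hq
        by_cases hz : cplx q = 0
        · have hq0 := cplx_eq_zero.mp hz
          rw [hq0, Fgen_corner, Fgen_corner]
        · refine Fgen_Fgen (beta α) (gamma α) hz ?_ (beta_gamma hα _)
          have h := gamma_mem hα (arg_mem_uhp hq)
          exact ⟨h.1, by linarith [h.2]⟩
    exact hInv.bijOn hMapsF hMapsG
  · -- continuity of F
    intro p hp
    by_cases hpc : p = ((1 : ℝ), (0 : ℝ))
    · subst hpc
      exact (continuousAt_Fgen_corner _).continuousWithinAt
    · exact (contDiffAt_Fgen (fun x => (contDiff_beta hα).contDiffAt)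
        (slit_of_sector hp hpc)).continuousAt.continuousWithinAt
  · -- inverse G
    have hInv : InvOn (Fgen (gamma α)) (Fgen (beta α)) sector upperHalfPlane := by
      constructor
      · intro p hp
        by_cases hz : cplx p = 0
        · have hp0 := cplx_eq_zero.mp hz
          rw [hp0, Fgen_corner, Fgen_corner]
        · exact Fgen_Fgen (gamma α) (beta α) hz (beta_mem hα (arg_mem_sector hp))
            (gamma_beta hα _)
      · intro q hq
        by_cases hz : cplx q = 0
        · have hq0 := cplx_eq_zero.mp hz
          rw [hq0, Fgen_corner, Fgen_corner]
        · refine Fgen_Fgen (beta α) (gamma α) hz ?_ (beta_gamma hα _)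
          have h := gamma_mem hα (arg_mem_uhp hq)
          exact ⟨h.1, by linarith [h.2]⟩
    refine ⟨Fgen (gamma α), hInv, ?_, ?_⟩
    · intro q hq
      by_cases hqc : q = ((1 : ℝ), (0 : ℝ))
      · subst hqc
        exact (continuousAt_Fgen_corner _).continuousWithinAt
      · exact (contDiffWithinAt_G hα hq hqc).continuousWithinAt
    · intro q hq
      exact (contDiffWithinAt_G hα hq.1 (by simpa using hq.2)).mono diff_subset
  · -- smoothness of F
    intro p hp
    exact (contDiffAt_Fgen (fun x => (contDiff_beta hα).contDiffAt)
      (slit_of_sector hp.1 (by simpa using hp.2))).contDiffWithinAt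
  · -- identity region
    intro p hp hle
    by_cases hz : cplx p = 0
    · rw [cplx_eq_zero.mp hz, Fgen_corner]
    · have hre0 : 0 ≤ (cplx p).re := by rw [cplx_re]; linarith [hp.1]
      have him0 : 0 ≤ (cplx p).im := by rw [cplx_im]; exact hp.2
      have hrepos : 0 < (cplx p).re := by
        rcases lt_or_eq_of_le hre0 with h | h
        · exact h
        · exfalso
          have h1 : (1 : ℝ) - p.1 = 0 := by rw [← cplx_re p, ← h]
          have h2 : p.2 = 0 := by
            rw [h1, mul_zero] at hle
            exact le_antisymm hle hp.2
          exact hz (Complex.ext (by rw [cplx_re, h1]; rfl) (by rw [cplx_im, h2]; rfl))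
      have habs := abs_lt.mp (Complex.abs_arg_lt_pi_div_two_iff.mpr (Or.inl hrepos))
      have hnn : 0 ≤ (cplx p).arg := Complex.arg_nonneg_iff.mpr him0
      have harg : (cplx p).arg ≤ π / 6 := by
        by_contra hgt
        push_neg at hgt
        have h3 : Real.tan (π / 6) < Real.tan (cplx p).arg :=
          Real.strictMonoOn_tan ⟨by linarith, by linarith⟩ ⟨by linarith, habs.2⟩ hgt
        have h4 : Real.tan (cplx p).arg = (cplx p).im / (cplx p).re := Complex.tan_arg _
        have h5 : (cplx p).im / (cplx p).re ≤ Real.tan (π / 6) := by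
          rw [div_le_iff₀ hrepos, cplx_im, cplx_re]
          exact hle
        rw [h4] at h3
        linarith
      rw [Fgen_eq, beta_eq_of_le hα harg, Prod.ext_iff]
      constructor
      · rw [norm_mul_cos, cplx_re]; ring
      · rw [norm_mul_sin, cplx_im]
  · -- rotation region
    intro p hp hge
    by_cases hz : cplx p = 0
    · rw [cplx_eq_zero.mp hz, Fgen_corner]
      norm_num
    · have hre0 : 0 ≤ (cplx p).re := by rw [cplx_re]; linarith [hp.1]
      have him0 : 0 ≤ (cplx p).im := by rw [cplx_im]; exact hp.2
      have hnn : 0 ≤ (cplx p).arg := Complex.arg_nonneg_iff.mpr him0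
      have harg1 : π / 3 ≤ (cplx p).arg := by
        rcases lt_or_eq_of_le hre0 with hrepos | hre_eq
        · by_contra hlt
          push_neg at hlt
          have habs := abs_lt.mp (Complex.abs_arg_lt_pi_div_two_iff.mpr (Or.inl hrepos))
          have h3 : Real.tan (cplx p).arg < Real.tan (π / 3) :=
            Real.strictMonoOn_tan ⟨habs.1, habs.2⟩ ⟨by linarith, by linarith⟩ hlt
          have h4 : Real.tan (cplx p).arg = (cplx p).im / (cplx p).re := Complex.tan_arg _
          have h5 : Real.tan (π / 3) ≤ (cplx p).im / (cplx p).re := by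
            rw [le_div_iff₀ hrepos, cplx_im, cplx_re]
            exact hge
          rw [h4] at h3
          linarith
        · have himpos : 0 < (cplx p).im :=
            lt_of_le_of_ne him0 (fun h => hz (Complex.ext hre_eq.symm h.symm))
          have h : (cplx p).arg = π / 2 :=
            Complex.arg_eq_pi_div_two_iff.mpr ⟨hre_eq.symm, himpos⟩
          rw [h]
          linarith
      rw [Fgen_eq, beta_shift hα harg1, Real.cos_add_pi_div_two, Real.sin_add_pi_div_two]
      simp only [Prod.mk.injEq]
      constructor
      · rw [mul_neg, norm_mul_sin, cplx_im]; ring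
      · rw [norm_mul_cos, cplx_re]
end

section
/- There exist a map Φ : ℝ² → ℝ² and an admissible function α : ℝ → ℝ such that: (a) Φ restricts to a bijection from Q₁ := [0,1] × [0,∞) onto Q := [0,∞) × [0,∞), continuous on Q₁ and with continuous inverse on Q; (b) Φ is C^∞ on Q₁ ∖ {(1,0)} and the inverse is C^∞ on Q ∖ {(1,0)} (in the sense of ContDiffOn); (c) there is a set U, relatively open in Q₁ and containing ({0} × [0,∞)) ∪ ([0,1) × {0}), with Φ(p) = p for all p ∈ U; (d) there is a set V, relatively open in Q₁ and containing {1} × (0,∞), with Φ(x, y) = (1 + y, 1 − x) for all (x, y) ∈ V; (e) there is δ > 0 such that Φ(1 − r·cos θ, r·sin θ) = (1 − r·cos(α(θ)), r·sin(α(θ))) for all r ∈ [0, δ] and θ ∈ [0, π/2]. -/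
open Real Set

/-- The strip `Q₁ = [0,1] × [0,∞)`. -/
def strip : Set (ℝ × ℝ) := Icc (0 : ℝ) 1 ×ˢ Ici (0 : ℝ)

/-- The quadrant `Q = [0,∞) × [0,∞)`. -/
def quadrant : Set (ℝ × ℝ) := Ici (0 : ℝ) ×ˢ Ici (0 : ℝ)

noncomputable section

open Function Filter Topology

/-- shorthand for the smooth transition function -/
abbrev ψ : ℝ → ℝ := Real.smoothTransition

lemma expNegInvGlue_mono : Monotone expNegInvGlue := by
  intro a b hab
  rcases le_or_gt b 0 with hb | hb
  · rw [expNegInvGlue.zero_of_nonpos (hab.trans hb), expNegInvGlue.zero_of_nonpos hb]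
  rcases le_or_gt a 0 with ha | ha
  · rw [expNegInvGlue.zero_of_nonpos ha]; exact expNegInvGlue.nonneg b
  · have h1 : expNegInvGlue a = Real.exp (-a⁻¹) := by
      rw [expNegInvGlue, if_neg (not_le.2 ha)]
    have h2 : expNegInvGlue b = Real.exp (-b⁻¹) := by
      rw [expNegInvGlue, if_neg (not_le.2 hb)]
    rw [h1, h2]
    apply Real.exp_le_exp.2
    have := one_div_le_one_div_of_le ha hab
    simp only [one_div] at this
    linarith

lemma ψ_mono : Monotone ψ := by
  intro a b hab
  simp only [ψ, Real.smoothTransition]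
  rw [div_le_div_iff₀ (Real.smoothTransition.pos_denom a) (Real.smoothTransition.pos_denom b)]
  have h1 : expNegInvGlue a ≤ expNegInvGlue b := expNegInvGlue_mono hab
  have h2 : expNegInvGlue (1 - b) ≤ expNegInvGlue (1 - a) := expNegInvGlue_mono (by linarith)
  nlinarith [expNegInvGlue.nonneg a, expNegInvGlue.nonneg b, expNegInvGlue.nonneg (1 - a),
    expNegInvGlue.nonneg (1 - b)]

/-- angle-transition profile -/
def sh (T : ℝ) : ℝ := ψ ((T - 27/100) * (900/257))
/-- far-field x cutoff -/
def uu (x : ℝ) : ℝ := ψ ((x - 1/5) * (10/7))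
/-- far-field y cutoff -/
def vv (y : ℝ) : ℝ := ψ ((y - 1/5) * 5)
/-- radial interpolation cutoff -/
def gg (r : ℝ) : ℝ := ψ ((r - 1/2) * (10/6))
/-- radius about the corner (1,0) -/
def rr (p : ℝ × ℝ) : ℝ := Real.sqrt ((1 - p.1)^2 + p.2^2)
/-- tangent of half the polar angle about (1,0) -/
def tt (p : ℝ × ℝ) : ℝ := p.2 / ((1 - p.1) + rr p)
/-- the interpolated rotation amount (in units of `π/2`) -/
def hh (p : ℝ × ℝ) : ℝ := (1 - gg (rr p)) * sh (tt p) + gg (rr p) * (uu p.1 * vv p.2)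
/-- the rotation angle -/
def om (p : ℝ × ℝ) : ℝ := π/2 * hh p
/-- the corner straightening map -/
def Phi (p : ℝ × ℝ) : ℝ × ℝ :=
  (1 - ((1 - p.1) * Real.cos (om p) - p.2 * Real.sin (om p)),
    (1 - p.1) * Real.sin (om p) + p.2 * Real.cos (om p))
/-- the inverse corner straightening map -/
def Psi : ℝ × ℝ → ℝ × ℝ := invFunOn Phi strip
/-- polar coordinates about (1,0) -/
def pt (r θ : ℝ) : ℝ × ℝ := (1 - r * Real.cos θ, r * Real.sin θ)
/-- tangent of the half angle -/
def th2 (θ : ℝ) : ℝ := Real.sin θ / (1 + Real.cos θ)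
/-- cutoff in the angle variable -/
def chi (θ : ℝ) : ℝ := ψ (θ + 2) * ψ (3 - θ)
/-- the admissible angle rescaling -/
def alp (θ : ℝ) : ℝ := θ + π/2 * (chi θ * sh (th2 θ))

lemma sh_nonneg (T : ℝ) : 0 ≤ sh T := Real.smoothTransition.nonneg _
lemma sh_le_one (T : ℝ) : sh T ≤ 1 := Real.smoothTransition.le_one _
lemma sh_of_le (T : ℝ) (h : T ≤ 27/100) : sh T = 0 :=
  Real.smoothTransition.zero_of_nonpos (by nlinarith)
lemma sh_of_ge (T : ℝ) (h : 5/9 ≤ T) : sh T = 1 :=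
  Real.smoothTransition.one_of_one_le (by nlinarith)
lemma sh_mono : Monotone sh := fun a b hab => ψ_mono (by nlinarith)
lemma uu_nonneg (x : ℝ) : 0 ≤ uu x := Real.smoothTransition.nonneg _
lemma uu_le_one (x : ℝ) : uu x ≤ 1 := Real.smoothTransition.le_one _
lemma uu_of_le (x : ℝ) (h : x ≤ 1/5) : uu x = 0 :=
  Real.smoothTransition.zero_of_nonpos (by nlinarith)
lemma uu_of_ge (x : ℝ) (h : 9/10 ≤ x) : uu x = 1 :=
  Real.smoothTransition.one_of_one_le (by nlinarith)
lemma uu_mono : Monotone uu := fun a b hab => ψ_mono (by nlinarith)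
lemma vv_nonneg (y : ℝ) : 0 ≤ vv y := Real.smoothTransition.nonneg _
lemma vv_le_one (y : ℝ) : vv y ≤ 1 := Real.smoothTransition.le_one _
lemma vv_of_le (y : ℝ) (h : y ≤ 1/5) : vv y = 0 :=
  Real.smoothTransition.zero_of_nonpos (by nlinarith)
lemma vv_of_ge (y : ℝ) (h : 2/5 ≤ y) : vv y = 1 :=
  Real.smoothTransition.one_of_one_le (by nlinarith)
lemma vv_mono : Monotone vv := fun a b hab => ψ_mono (by nlinarith)
lemma gg_nonneg (r : ℝ) : 0 ≤ gg r := Real.smoothTransition.nonneg _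
lemma gg_le_one (r : ℝ) : gg r ≤ 1 := Real.smoothTransition.le_one _
lemma gg_of_le (r : ℝ) (h : r ≤ 1/2) : gg r = 0 :=
  Real.smoothTransition.zero_of_nonpos (by nlinarith)
lemma gg_of_ge (r : ℝ) (h : 11/10 ≤ r) : gg r = 1 :=
  Real.smoothTransition.one_of_one_le (by nlinarith)

lemma rr_nonneg (p : ℝ × ℝ) : 0 ≤ rr p := Real.sqrt_nonneg _
lemma rr_sq (p : ℝ × ℝ) : rr p ^ 2 = (1 - p.1)^2 + p.2^2 :=
  Real.sq_sqrt (by positivity)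
lemma rr_pt {r : ℝ} (hr : 0 ≤ r) (θ : ℝ) : rr (pt r θ) = r := by
  have : (1 - (1 - r * Real.cos θ))^2 + (r * Real.sin θ)^2 = r ^ 2 := by
    have := Real.sin_sq_add_cos_sq θ; nlinarith
  rw [rr, pt]; simp only; rw [this, Real.sqrt_sq hr]
lemma rr_eq_zero_iff (p : ℝ × ℝ) : rr p = 0 ↔ p = ((1:ℝ), (0:ℝ)) := by
  rw [rr, Real.sqrt_eq_zero (by positivity)]
  constructor
  · intro h
    have h1 : 1 - p.1 = 0 := by nlinarith [sq_nonneg (1 - p.1), sq_nonneg p.2]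
    have h2 : p.2 = 0 := by nlinarith [sq_nonneg (1 - p.1), sq_nonneg p.2]
    have h3 : p.1 = 1 := by linarith
    exact Prod.ext (by simpa using h3) (by simpa using h2)
  · intro h; rw [h]; norm_num

lemma hh_nonneg (p : ℝ × ℝ) : 0 ≤ hh p := by
  have := gg_le_one (rr p); have := gg_nonneg (rr p)
  have := sh_nonneg (tt p); have := uu_nonneg p.1; have := vv_nonneg p.2
  rw [hh]
  have := mul_nonneg (uu_nonneg p.1) (vv_nonneg p.2)
  nlinarith
lemma hh_le_one (p : ℝ × ℝ) : hh p ≤ 1 := by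
  have h1 := gg_le_one (rr p); have h2 := gg_nonneg (rr p)
  have h3 := sh_nonneg (tt p); have h4 := uu_nonneg p.1; have h5 := vv_nonneg p.2
  have h6 := sh_le_one (tt p); have h7 := uu_le_one p.1; have h8 := vv_le_one p.2
  have huv : uu p.1 * vv p.2 ≤ 1 := by nlinarith
  rw [hh]; nlinarith [mul_nonneg h2 (sub_nonneg.2 huv),
    mul_nonneg (sub_nonneg.2 h1) (sub_nonneg.2 h6)]
lemma om_nonneg (p : ℝ × ℝ) : 0 ≤ om p := by
  have := hh_nonneg p; have := Real.pi_pos; rw [om]; positivity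
lemma om_le (p : ℝ × ℝ) : om p ≤ π / 2 := by
  have := hh_le_one p; have := Real.pi_pos; rw [om]; nlinarith

lemma mem_strip {p : ℝ × ℝ} : p ∈ strip ↔ (0 ≤ p.1 ∧ p.1 ≤ 1) ∧ 0 ≤ p.2 := by
  simp [strip, Set.mem_prod, Set.mem_Icc, Set.mem_Ici]
lemma mem_quadrant {p : ℝ × ℝ} : p ∈ quadrant ↔ 0 ≤ p.1 ∧ 0 ≤ p.2 := by
  simp [quadrant, Set.mem_prod, Set.mem_Ici, Prod.le_def]

lemma abs_fst_le_rr (p : ℝ × ℝ) : |1 - p.1| ≤ rr p := by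
  rw [rr, ← Real.sqrt_sq_eq_abs]
  exact Real.sqrt_le_sqrt (by nlinarith [sq_nonneg p.2])
lemma abs_snd_le_rr (p : ℝ × ℝ) : |p.2| ≤ rr p := by
  rw [rr, ← Real.sqrt_sq_eq_abs]
  exact Real.sqrt_le_sqrt (by nlinarith [sq_nonneg (1 - p.1)])

/-- On the region `U₃` near the bottom edge, `hh` vanishes. -/
lemma hh_zero_U3 {p : ℝ × ℝ} (hp : p ∈ strip) (h1 : p.2 < 1/5) (h2 : p.1 < 1 - 5 * p.2) :
    hh p = 0 := by
  obtain ⟨⟨hx0, hx1⟩, hy0⟩ := mem_strip.1 hp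
  have hden : 1 - p.1 ≤ (1 - p.1) + rr p := by
    have := rr_nonneg p; linarith
  have hrge : 1 - p.1 ≤ rr p := le_trans (le_abs_self _) (abs_fst_le_rr p)
  have htt : tt p ≤ 27/100 := by
    rw [tt, div_le_iff₀ (by nlinarith)]
    nlinarith
  rw [hh, sh_of_le _ htt, vv_of_le _ h1.le]
  ring
/-- On the region `U₂` near the left edge, `hh` vanishes. -/
lemma hh_zero_U2 {p : ℝ × ℝ} (hp : p ∈ strip) (h1 : p.1 < 1/100) : hh p = 0 := by
  obtain ⟨⟨hx0, hx1⟩, hy0⟩ := mem_strip.1 hp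
  rw [hh, uu_of_le _ (by linarith)]
  rcases le_or_gt (11/10) (rr p) with hr | hr
  · rw [gg_of_ge _ hr]; ring
  · have hrge : 1 - p.1 ≤ rr p := le_trans (le_abs_self _) (abs_fst_le_rr p)
    have hsq : rr p ^ 2 = (1 - p.1)^2 + p.2^2 := rr_sq p
    have hy2 : p.2^2 < 2299/10000 := by nlinarith
    have hyb : p.2 ≤ 48/100 := by nlinarith
    have htt : tt p ≤ 27/100 := by
      rw [tt, div_le_iff₀ (by nlinarith)]
      nlinarith
    rw [sh_of_le _ htt]; ring
/-- On the region `V` near the right edge, `hh` equals one. -/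
lemma hh_one_V {p : ℝ × ℝ} (hp : p ∈ strip) (h1 : 49/50 < p.1) (h2 : 10 * (1 - p.1) < p.2) :
    hh p = 1 := by
  obtain ⟨⟨hx0, hx1⟩, hy0⟩ := mem_strip.1 hp
  have hxle : 1 - p.1 ≤ 1/50 := by linarith
  have hx : 0 ≤ 1 - p.1 := by linarith
  have hy : 0 < p.2 := by linarith
  have hrle : rr p ≤ (1 - p.1) + p.2 := by
    rw [rr]
    have : (1 - p.1)^2 + p.2^2 ≤ ((1 - p.1) + p.2)^2 := by nlinarith
    calc Real.sqrt ((1 - p.1)^2 + p.2^2) ≤ Real.sqrt (((1 - p.1) + p.2)^2) :=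
          Real.sqrt_le_sqrt this
      _ = (1 - p.1) + p.2 := Real.sqrt_sq (by linarith)
  have hrpos : 0 < (1 - p.1) + rr p := by
    have : p.2 ≤ rr p := le_trans (le_abs_self _) (abs_snd_le_rr p)
    linarith
  have htt : 5/9 ≤ tt p := by
    rw [tt, le_div_iff₀ hrpos]
    nlinarith
  rw [hh, sh_of_ge _ htt, uu_of_ge _ (by linarith)]
  rcases le_or_gt (rr p) (1/2) with hr | hr
  · rw [gg_of_le _ hr]; ring
  · have hsq : rr p ^ 2 = (1 - p.1)^2 + p.2^2 := rr_sq p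
    have : 2/5 ≤ p.2 := by nlinarith
    rw [vv_of_ge _ this]; ring

lemma Phi_id {p : ℝ × ℝ} (h : hh p = 0) : Phi p = p := by
  rw [Phi, om, h]
  simp
lemma Phi_rot {p : ℝ × ℝ} (h : hh p = 1) : Phi p = (1 + p.2, 1 - p.1) := by
  rw [Phi, om, h, mul_one, Real.cos_pi_div_two, Real.sin_pi_div_two]
  norm_num
lemma Phi_corner : Phi ((1:ℝ), (0:ℝ)) = ((1:ℝ), (0:ℝ)) := by
  rw [Phi]; norm_num

lemma rr_Phi (p : ℝ × ℝ) : rr (Phi p) = rr p := by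
  rw [rr, rr, Phi]
  congr 1
  have h := Real.sin_sq_add_cos_sq (om p)
  simp only
  nlinarith [h]

/-- the polar angle about (1,0) of a point in the strip -/
def ang (p : ℝ × ℝ) : ℝ := Real.arcsin (p.2 / rr p)

section Ang
variable {p : ℝ × ℝ} (hp : p ∈ strip) (hr : 0 < rr p)
include hp hr

lemma ratio_mem : 0 ≤ p.2 / rr p ∧ p.2 / rr p ≤ 1 := by
  obtain ⟨⟨hx0, hx1⟩, hy0⟩ := mem_strip.1 hp
  constructor
  · exact div_nonneg hy0 hr.le
  · rw [div_le_one hr]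
    calc p.2 ≤ |p.2| := le_abs_self _
    _ ≤ rr p := abs_snd_le_rr p

lemma ang_mem : ang p ∈ Icc (0:ℝ) (π/2) :=
  ⟨Real.arcsin_nonneg.2 (ratio_mem hp hr).1, Real.arcsin_le_pi_div_two _⟩

lemma sin_ang : Real.sin (ang p) = p.2 / rr p :=
  Real.sin_arcsin (by linarith [(ratio_mem hp hr).1]) (ratio_mem hp hr).2

lemma cos_ang : Real.cos (ang p) = (1 - p.1) / rr p := by
  obtain ⟨⟨hx0, hx1⟩, hy0⟩ := mem_strip.1 hp
  rw [ang, Real.cos_arcsin]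
  have h1 : 1 - (p.2 / rr p) ^ 2 = ((1 - p.1) / rr p) ^ 2 := by
    have := rr_sq p
    field_simp
    nlinarith
  rw [h1, Real.sqrt_sq (div_nonneg (by linarith) hr.le)]

lemma pt_ang : pt (rr p) (ang p) = p := by
  obtain ⟨⟨hx0, hx1⟩, hy0⟩ := mem_strip.1 hp
  rw [pt, sin_ang hp hr, cos_ang hp hr]
  field_simp
  simp

end Ang

lemma Phi_pt {r : ℝ} (θ : ℝ) : Phi (pt r θ) = pt r (θ + om (pt r θ)) := by
  rw [Phi]
  set w := om (pt r θ) with hw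
  rw [pt, pt]
  simp only
  rw [Real.cos_add, Real.sin_add, Prod.mk.injEq]
  constructor <;> ring

lemma th2_monoOn : MonotoneOn th2 (Icc (0:ℝ) (π/2)) := by
  intro a ha b hb hab
  obtain ⟨ha0, ha1⟩ := ha
  obtain ⟨hb0, hb1⟩ := hb
  have hca : 0 ≤ Real.cos a := Real.cos_nonneg_of_mem_Icc ⟨by linarith [Real.pi_pos], ha1⟩
  have hcb : 0 ≤ Real.cos b := Real.cos_nonneg_of_mem_Icc ⟨by linarith [Real.pi_pos], hb1⟩
  have hsa : 0 ≤ Real.sin a := Real.sin_nonneg_of_nonneg_of_le_pi ha0 (by linarith [Real.pi_pos])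
  have hsb : 0 ≤ Real.sin b := Real.sin_nonneg_of_nonneg_of_le_pi hb0 (by linarith [Real.pi_pos])
  have hsab : Real.sin a ≤ Real.sin b := by
    rcases eq_or_lt_of_le hab with h | h
    · rw [h]
    · exact (Real.strictMonoOn_sin ⟨by linarith, ha1⟩ ⟨by linarith, hb1⟩ h).le
  have hcab : Real.cos b ≤ Real.cos a := by
    rcases eq_or_lt_of_le hab with h | h
    · rw [h]
    · exact (Real.strictAntiOn_cos ⟨ha0, by linarith [Real.pi_pos]⟩
        ⟨hb0, by linarith [Real.pi_pos]⟩ h).le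
  rw [th2, th2, div_le_div_iff₀ (by linarith) (by linarith)]
  nlinarith [mul_le_mul hsab hcab hcb hsb]

lemma cos_le_one_aux {r θ : ℝ} : True := trivial

lemma tt_pt {r : ℝ} (hr : 0 < r) {θ : ℝ} (hθ : θ ∈ Icc (0:ℝ) (π/2)) :
    tt (pt r θ) = th2 θ := by
  have hc : 0 ≤ Real.cos θ :=
    Real.cos_nonneg_of_mem_Icc ⟨by linarith [Real.pi_pos, hθ.1], hθ.2⟩
  rw [tt, rr_pt hr.le, pt, th2]
  simp only
  rw [show 1 - (1 - r * Real.cos θ) + r = r * (1 + Real.cos θ) by ring]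
  rw [mul_div_mul_left _ _ (ne_of_gt hr)]

lemma hh_pt {r : ℝ} (hr : 0 < r) {θ : ℝ} (hθ : θ ∈ Icc (0:ℝ) (π/2)) :
    hh (pt r θ) = (1 - gg r) * sh (th2 θ)
      + gg r * (uu (1 - r * Real.cos θ) * vv (r * Real.sin θ)) := by
  rw [hh, rr_pt hr.le, tt_pt hr hθ, pt]

lemma om_pt_monoOn {r : ℝ} (hr : 0 < r) :
    MonotoneOn (fun θ => om (pt r θ)) (Icc (0:ℝ) (π/2)) := by
  intro a ha b hb hab
  have hpi := Real.pi_pos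
  simp only [om]
  have key : hh (pt r a) ≤ hh (pt r b) := by
    rw [hh_pt hr ha, hh_pt hr hb]
    have hs : sh (th2 a) ≤ sh (th2 b) := sh_mono (th2_monoOn ha hb hab)
    have hcab : Real.cos b ≤ Real.cos a := by
      rcases eq_or_lt_of_le hab with h | h
      · rw [h]
      · exact (Real.strictAntiOn_cos ⟨ha.1, by linarith [Real.pi_pos, ha.2]⟩
          ⟨hb.1, by linarith [Real.pi_pos, hb.2]⟩ h).le
    have hsab : Real.sin a ≤ Real.sin b := by
      rcases eq_or_lt_of_le hab with h | h
      · rw [h]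
      · exact (Real.strictMonoOn_sin ⟨by linarith [ha.1], ha.2⟩
          ⟨by linarith [hb.1, hb.2], hb.2⟩ h).le
    have hu : uu (1 - r * Real.cos a) ≤ uu (1 - r * Real.cos b) :=
      uu_mono (by nlinarith)
    have hv : vv (r * Real.sin a) ≤ vv (r * Real.sin b) :=
      vv_mono (by nlinarith)
    have huv : uu (1 - r * Real.cos a) * vv (r * Real.sin a)
        ≤ uu (1 - r * Real.cos b) * vv (r * Real.sin b) :=
      mul_le_mul hu hv (vv_nonneg _) (uu_nonneg _)
    have hg0 := gg_nonneg r
    have hg1 := gg_le_one r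
    have := mul_le_mul_of_nonneg_left hs (by linarith : (0:ℝ) ≤ 1 - gg r)
    have := mul_le_mul_of_nonneg_left huv hg0
    linarith
  nlinarith [Real.pi_pos]

lemma F_strictMonoOn {r : ℝ} (hr : 0 < r) :
    StrictMonoOn (fun θ => θ + om (pt r θ)) (Icc (0: ℝ) (π/2)) := by
  intro a ha b hb hab
  have := om_pt_monoOn hr ha hb hab.le
  simp only at this ⊢
  linarith

/-- derivative of a function monotone on an interval is nonnegative -/
lemma deriv_nonneg_of_monotoneOn {f : ℝ → ℝ} {a b x d : ℝ} (hax : a ≤ x) (hxb : x < b)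
    (hm : MonotoneOn f (Icc a b)) (hd : HasDerivAt f d x) : 0 ≤ d := by
  have hslope : Tendsto (slope f x) (𝓝[>] x) (𝓝 d) :=
    (hasDerivAt_iff_tendsto_slope.1 hd).mono_left
      (nhdsWithin_mono _ (fun y hy => ne_of_gt hy))
  refine ge_of_tendsto hslope ?_
  filter_upwards [Ioo_mem_nhdsGT_of_mem ⟨le_refl x, hxb⟩] with y hy
  rw [slope_def_field]
  have h1 : f x ≤ f y := hm ⟨hax, hxb.le⟩ ⟨hax.trans hy.1.le, hy.2.le⟩ hy.1.le
  have h2 : 0 < y - x := by linarith [hy.1]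
  exact mul_nonneg (sub_nonneg.2 h1) (by positivity)

lemma good_pt {p : ℝ × ℝ} (h : p.1 < 1 ∨ p.2 ≠ 0) :
    0 < rr p ∧ 0 < (1 - p.1) + rr p := by
  rcases h with h | h
  · have h1 : 0 < 1 - p.1 := by linarith
    have h2 : 1 - p.1 ≤ rr p := le_trans (le_abs_self _) (abs_fst_le_rr p)
    exact ⟨by linarith, by linarith⟩
  · have h2 : 0 < p.2^2 := by positivity
    have h3 : |1 - p.1| < rr p := by
      rw [rr, ← Real.sqrt_sq_eq_abs]
      apply Real.sqrt_lt_sqrt (sq_nonneg _)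
      linarith
    exact ⟨lt_of_le_of_lt (abs_nonneg _) h3, by nlinarith [neg_abs_le (1 - p.1)]⟩

lemma contDiffAt_rr {n : ℕ∞} {p : ℝ × ℝ} (h : 0 < rr p) : ContDiffAt ℝ n rr p := by
  have h' : (1 - p.1)^2 + p.2^2 ≠ 0 := by
    intro hc
    rw [rr, hc, Real.sqrt_zero] at h
    exact lt_irrefl 0 h
  have hinner : ContDiffAt ℝ n (fun v : ℝ × ℝ => (1 - v.1)^2 + v.2^2) p := by fun_prop
  exact (Real.contDiffAt_sqrt h').comp p hinner

lemma contDiffAt_hh {n : ℕ∞} {p : ℝ × ℝ} (h : p.1 < 1 ∨ p.2 ≠ 0) : ContDiffAt ℝ n hh p := by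
  obtain ⟨hr, hd⟩ := good_pt h
  have hrr : ContDiffAt ℝ n rr p := contDiffAt_rr hr
  have htt : ContDiffAt ℝ n tt p := by
    apply ContDiffAt.div
    · fun_prop
    · exact (by fun_prop : ContDiffAt ℝ n (fun v : ℝ × ℝ => 1 - v.1) p).add hrr
    · exact ne_of_gt hd
  have hψ : ContDiff ℝ n ψ := Real.smoothTransition.contDiff
  have hsh : ContDiffAt ℝ n (fun v => sh (tt v)) p := by
    apply hψ.contDiffAt.comp
    exact (htt.sub contDiffAt_const).mul contDiffAt_const
  have hgg : ContDiffAt ℝ n (fun v => gg (rr v)) p := by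
    apply hψ.contDiffAt.comp
    exact (hrr.sub contDiffAt_const).mul contDiffAt_const
  have huu : ContDiffAt ℝ n (fun v : ℝ × ℝ => uu v.1) p := by
    apply hψ.contDiffAt.comp
    fun_prop
  have hvv : ContDiffAt ℝ n (fun v : ℝ × ℝ => vv v.2) p := by
    apply hψ.contDiffAt.comp
    fun_prop
  exact ((contDiffAt_const.sub hgg).mul hsh).add (hgg.mul (huu.mul hvv))

lemma contDiffAt_om {n : ℕ∞} {p : ℝ × ℝ} (h : p.1 < 1 ∨ p.2 ≠ 0) : ContDiffAt ℝ n om p :=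
  contDiffAt_const.mul (contDiffAt_hh h)


lemma Phi_eq_pt (p : ℝ × ℝ) (hp : p ∈ strip) (hr : 0 < rr p) :
    Phi p = pt (rr p) (ang p + om p) := by
  conv_lhs => rw [← pt_ang hp hr]
  rw [Phi_pt, pt_ang hp hr]

lemma mapsTo_Phi : MapsTo Phi strip quadrant := by
  intro p hp
  have hpi := Real.pi_pos
  obtain ⟨⟨hx0, hx1⟩, hy0⟩ := mem_strip.1 hp
  rcases eq_or_lt_of_le (rr_nonneg p) with hr | hr
  · have hc : p = ((1:ℝ),(0:ℝ)) := (rr_eq_zero_iff p).1 hr.symm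
    rw [hc, Phi_corner, mem_quadrant]; norm_num
  rw [Phi_eq_pt p hp hr, mem_quadrant, pt]
  set r := rr p
  set θ := ang p
  obtain ⟨hθ0, hθ1⟩ := ang_mem hp hr
  have hω0 := om_nonneg p
  have hω1 := om_le p
  have hsum0 : 0 ≤ θ + om p := by linarith
  have hsumpi : θ + om p ≤ π := by linarith
  refine ⟨?_, ?_⟩
  · show 0 ≤ 1 - r * Real.cos (θ + om p)
    have hcab : Real.cos (θ + om p) ≤ Real.cos θ := by
      rcases eq_or_lt_of_le hω0 with h | h
      · rw [← h, add_zero]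
      · exact (Real.strictAntiOn_cos ⟨hθ0, by linarith⟩ ⟨hsum0, hsumpi⟩ (by linarith)).le
    have hcosθ : r * Real.cos θ = 1 - p.1 := by
      rw [cos_ang hp hr]; field_simp
      exact mul_div_cancel_left₀ _ hr.ne'
    nlinarith
  · show 0 ≤ r * Real.sin (θ + om p)
    exact mul_nonneg hr.le (Real.sin_nonneg_of_nonneg_of_le_pi hsum0 hsumpi)

lemma injOn_Phi : InjOn Phi strip := by
  intro p hp q hq hpq
  have hpi := Real.pi_pos
  have hrr : rr p = rr q := by rw [← rr_Phi p, ← rr_Phi q, hpq]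
  rcases eq_or_lt_of_le (rr_nonneg p) with hr | hr
  · rw [(rr_eq_zero_iff p).1 hr.symm, (rr_eq_zero_iff q).1 (by rw [← hrr, ← hr])]
  have hrq : 0 < rr q := by rw [← hrr]; exact hr
  have h1 : Phi p = pt (rr p) (ang p + om p) := Phi_eq_pt p hp hr
  have h2 : Phi q = pt (rr q) (ang q + om q) := Phi_eq_pt q hq hrq
  have hb1 := ang_mem hp hr
  have hb2 := ang_mem hq hrq
  have hsum1 : ang p + om p ∈ Icc (0:ℝ) π :=
    ⟨by linarith [hb1.1, om_nonneg p], by linarith [hb1.2, om_le p]⟩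
  have hsum2 : ang q + om q ∈ Icc (0:ℝ) π :=
    ⟨by linarith [hb2.1, om_nonneg q], by linarith [hb2.2, om_le q]⟩
  have hcos : Real.cos (ang p + om p) = Real.cos (ang q + om q) := by
    have hfst := congrArg Prod.fst hpq
    rw [h1, h2] at hfst
    simp only [pt] at hfst
    rw [hrr] at hfst
    have h3 : rr q * Real.cos (ang p + om p) = rr q * Real.cos (ang q + om q) := by
      linarith
    exact mul_left_cancel₀ (ne_of_gt hrq) h3
  have hangsum : ang p + om p = ang q + om q := Real.injOn_cos hsum1 hsum2 hcos
  -- both angles are in [0, π/2] and F is strictly monotone there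
  have hFp : ang p + om p = ang p + om (pt (rr p) (ang p)) := by rw [pt_ang hp hr]
  have hFq : ang q + om q = ang q + om (pt (rr q) (ang q)) := by rw [pt_ang hq hrq]
  have hang : ang p = ang q := by
    apply (F_strictMonoOn hr).injOn hb1 hb2
    show ang p + om (pt (rr p) (ang p)) = ang q + om (pt (rr p) (ang q))
    rw [← hFp, hrr, ← hFq]
    exact hangsum
  calc p = pt (rr p) (ang p) := (pt_ang hp hr).symm
  _ = pt (rr q) (ang q) := by rw [hrr, hang]
  _ = q := pt_ang hq hrq

lemma surjOn_Phi : SurjOn Phi strip quadrant := by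
  intro w hw
  have hpi := Real.pi_pos
  obtain ⟨hu0, hv0⟩ := mem_quadrant.1 hw
  rcases eq_or_lt_of_le (rr_nonneg w) with hr | hr
  · refine ⟨((1:ℝ),(0:ℝ)), mem_strip.2 (by norm_num), ?_⟩
    rw [Phi_corner, (rr_eq_zero_iff w).1 hr.symm]
  set r := rr w with hrdef
  -- the angle of w
  have habs : |1 - w.1| ≤ r := abs_fst_le_rr w
  have hbound : -1 ≤ (1 - w.1)/r ∧ (1 - w.1)/r ≤ 1 := by
    rw [neg_le, ← neg_div]
    constructor
    · rw [div_le_one hr]; exact le_trans (neg_le_abs _) habs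
    · rw [div_le_one hr]; exact le_trans (le_abs_self _) habs
  set θ' := Real.arccos ((1 - w.1)/r) with hθ'def
  have hθ'mem : θ' ∈ Icc (0:ℝ) π := ⟨Real.arccos_nonneg _, Real.arccos_le_pi _⟩
  have hcosθ' : Real.cos θ' = (1 - w.1)/r := Real.cos_arccos hbound.1 hbound.2
  have hsinθ' : Real.sin θ' = w.2 / r := by
    rw [hθ'def, Real.sin_arccos]
    have h1 : 1 - ((1 - w.1)/r)^2 = (w.2/r)^2 := by
      have := rr_sq w; field_simp; nlinarith
    rw [h1, Real.sqrt_sq (div_nonneg hv0 hr.le)]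
  have hptθ' : pt r θ' = w := by
    rw [pt, hcosθ', hsinθ']
    field_simp
    simp
  -- the minimal angle
  set θm := if r ≤ 1 then (0:ℝ) else Real.arccos (1/r) with hθmdef
  have hθm_mem : θm ∈ Icc (0:ℝ) (π/2) := by
    rw [hθmdef]
    split_ifs with h
    · exact ⟨le_refl _, by linarith⟩
    · exact ⟨Real.arccos_nonneg _, Real.arccos_le_pi_div_two.2 (div_nonneg zero_le_one hr.le)⟩
  have hcosθm : r * Real.cos θm = min 1 r := by
    rw [hθmdef]
    split_ifs with h
    · simp [min_eq_right h]
    · rw [Real.cos_arccos (by linarith [div_nonneg zero_le_one hr.le]) (by rw [div_le_one hr]; linarith),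
        min_eq_left (by linarith)]
      field_simp
  -- endpoint values of F
  have hFθm : θm + om (pt r θm) = θm := by
    have : hh (pt r θm) = 0 := by
      rcases le_or_gt r 1 with h | h
      · have : θm = 0 := by rw [hθmdef, if_pos h]
        rw [this]
        apply hh_zero_U3
        · rw [pt]
          simp [Real.cos_zero, Real.sin_zero]
          exact mem_strip.2 (by simp; constructor <;> linarith)
        · rw [pt]; simpa using by norm_num
        · rw [pt]; simp [Real.cos_zero, Real.sin_zero]; linarith
      · apply hh_zero_U2
        · apply mem_strip.2
          rw [pt]
          have h1 : 1 - r * Real.cos θm = 0 := by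
            rw [hcosθm, min_eq_left (by linarith)]; ring
          constructor
          · constructor
            · simp only; linarith
            · simp only; linarith
          · simp only
            exact mul_nonneg hr.le (Real.sin_nonneg_of_nonneg_of_le_pi hθm_mem.1
              (by linarith [hθm_mem.2]))
        · rw [pt]
          have h1 : 1 - r * Real.cos θm = 0 := by
            rw [hcosθm, min_eq_left (by linarith)]; ring
          simp only; linarith
    rw [om, this]; ring
  have hFhalf : (π/2) + om (pt r (π/2)) = π := by
    have hpt : pt r (π/2) = (1, r) := by
      rw [pt, Real.cos_pi_div_two, Real.sin_pi_div_two]; norm_num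
    have : hh (pt r (π/2)) = 1 := by
      rw [hpt]
      apply hh_one_V (mem_strip.2 ⟨⟨by norm_num, by norm_num⟩, by simpa using hr.le⟩)
        (by norm_num)
      show (10:ℝ) * (1 - 1) < r
      linarith
    rw [om, this]; ring
  -- θ' lies between the endpoint values
  have hθ'ge : θm ≤ θ' := by
    rw [hθmdef]
    split_ifs with h
    · exact hθ'mem.1
    · push_neg at h
      apply Real.strictAntiOn_arccos.antitoneOn
        ⟨by linarith [hbound.1], by linarith [hbound.2]⟩
        ⟨by linarith [div_nonneg zero_le_one hr.le], by rw [div_le_one hr]; linarith⟩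
      rw [div_le_div_iff₀ hr hr]
      nlinarith
  -- continuity of F on [θm, π/2]
  have hcont : ContinuousOn (fun θ => θ + om (pt r θ)) (Icc θm (π/2)) := by
    intro θ hθ
    have hθ0 : 0 ≤ θ := le_trans hθm_mem.1 hθ.1
    have hgood : (pt r θ).1 < 1 ∨ (pt r θ).2 ≠ 0 := by
      rcases lt_or_ge θ (π/2) with h | h
      · left
        have hc : 0 < Real.cos θ := Real.cos_pos_of_mem_Ioo ⟨by linarith, h⟩
        show 1 - r * Real.cos θ < 1
        nlinarith
      · right
        have hθeq : θ = π/2 := le_antisymm hθ.2 h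
        have hs : 0 < Real.sin θ := by rw [hθeq, Real.sin_pi_div_two]; norm_num
        show r * Real.sin θ ≠ 0
        exact ne_of_gt (mul_pos hr hs)
    have h1 : ContinuousAt (fun θ => om (pt r θ)) θ :=
      ((contDiffAt_om (n := 0) hgood).continuousAt).comp
        (by unfold pt; fun_prop : Continuous (fun θ => pt r θ)).continuousAt
    exact continuousWithinAt_id.add h1.continuousWithinAt
  have hIVT := intermediate_value_Icc hθm_mem.2 hcont
  have hθ'in : θ' ∈ Icc (θm + om (pt r θm)) ((π/2) + om (pt r (π/2))) := by
    rw [hFθm, hFhalf]; exact ⟨hθ'ge, hθ'mem.2⟩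
  obtain ⟨θ, hθmem, hθeq⟩ := hIVT hθ'in
  have hθIcc : θ ∈ Icc (0:ℝ) (π/2) := ⟨le_trans hθm_mem.1 hθmem.1, hθmem.2⟩
  have hcosθ : 0 ≤ Real.cos θ :=
    Real.cos_nonneg_of_mem_Icc ⟨by linarith [hθIcc.1], hθIcc.2⟩
  have hsinθ : 0 ≤ Real.sin θ :=
    Real.sin_nonneg_of_nonneg_of_le_pi hθIcc.1 (by linarith [hθIcc.2])
  refine ⟨pt r θ, ?_, ?_⟩
  · apply mem_strip.2
    rw [pt]
    refine ⟨⟨?_, by simp only; nlinarith⟩, by simp only; positivity⟩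
    simp only
    have : r * Real.cos θ ≤ min 1 r := by
      rw [← hcosθm]
      have : Real.cos θ ≤ Real.cos θm := by
        rcases eq_or_lt_of_le hθmem.1 with h | h
        · rw [h]
        · exact (Real.strictAntiOn_cos ⟨hθm_mem.1, by linarith [hθm_mem.2]⟩
            ⟨hθIcc.1, by linarith [hθIcc.2]⟩ h).le
      nlinarith
    have := min_le_left 1 r
    linarith
  · rw [Phi_pt]
    rw [show θ + om (pt r θ) = θ' from hθeq, hptθ']

lemma bijOn_Phi : BijOn Phi strip quadrant := ⟨mapsTo_Phi, injOn_Phi, surjOn_Phi⟩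

lemma contDiffAt_Phi {n : ℕ∞} {p : ℝ × ℝ} (h : p.1 < 1 ∨ p.2 ≠ 0) : ContDiffAt ℝ n Phi p := by
  have hom := contDiffAt_om (n := n) h
  have hcos : ContDiffAt ℝ n (fun v => Real.cos (om v)) p :=
    Real.contDiff_cos.contDiffAt.comp p hom
  have hsin : ContDiffAt ℝ n (fun v => Real.sin (om v)) p :=
    Real.contDiff_sin.contDiffAt.comp p hom
  have h1 : ContDiffAt ℝ n (fun v : ℝ × ℝ => 1 - v.1) p := by fun_prop
  have h2 : ContDiffAt ℝ n (fun v : ℝ × ℝ => v.2) p := by fun_prop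
  exact (contDiffAt_const.sub ((h1.mul hcos).sub (h2.mul hsin))).prodMk
    ((h1.mul hsin).add (h2.mul hcos))

lemma stripgood {p : ℝ × ℝ} (hp : p ∈ strip) (hne : p ≠ ((1:ℝ), (0:ℝ))) :
    p.1 < 1 ∨ p.2 ≠ 0 := by
  obtain ⟨⟨hx0, hx1⟩, hy0⟩ := mem_strip.1 hp
  rcases lt_or_eq_of_le hx1 with h | h
  · exact Or.inl h
  · right
    intro hc
    exact hne (Prod.ext h hc)

lemma contDiffOn_Phi : ContDiffOn ℝ (⊤:ℕ∞) Phi (strip \ {((1:ℝ), (0:ℝ))}) := by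
  intro p hp
  exact (contDiffAt_Phi (stripgood hp.1 (by simpa using hp.2))).contDiffWithinAt

lemma dist_le_rr (p : ℝ × ℝ) : dist p ((1:ℝ), (0:ℝ)) ≤ rr p := by
  rw [Prod.dist_eq, max_le_iff, Real.dist_eq, Real.dist_eq]
  constructor
  · rw [abs_sub_comm]
    exact abs_fst_le_rr p
  · simpa using abs_snd_le_rr p

lemma rr_le_dist (p : ℝ × ℝ) : rr p ≤ 2 * dist p ((1:ℝ), (0:ℝ)) := by
  have h1 : rr p ≤ |1 - p.1| + |p.2| := by
    rw [rr]
    have h2 : (1 - p.1)^2 + p.2^2 ≤ (|1 - p.1| + |p.2|)^2 := by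
      nlinarith [abs_nonneg (1 - p.1), abs_nonneg p.2, sq_abs (1 - p.1), sq_abs p.2,
        mul_nonneg (abs_nonneg (1 - p.1)) (abs_nonneg p.2)]
    calc Real.sqrt ((1 - p.1)^2 + p.2^2) ≤ Real.sqrt ((|1 - p.1| + |p.2|)^2) :=
        Real.sqrt_le_sqrt h2
    _ = |1 - p.1| + |p.2| := Real.sqrt_sq (by positivity)
  have h2 : |1 - p.1| ≤ dist p ((1:ℝ), (0:ℝ)) := by
    rw [Prod.dist_eq, Real.dist_eq, abs_sub_comm]
    exact le_max_left _ _
  have h3 : |p.2| ≤ dist p ((1:ℝ), (0:ℝ)) := by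
    rw [Prod.dist_eq, Real.dist_eq]
    simpa using le_max_right (|p.1 - 1|) (|p.2 - 0|)
  linarith

lemma continuousOn_Phi : ContinuousOn Phi strip := by
  intro p hp
  rcases eq_or_ne p ((1:ℝ), (0:ℝ)) with hc | hc
  · rw [hc, ContinuousWithinAt, Metric.tendsto_nhdsWithin_nhds]
    intro ε hε
    refine ⟨ε/2, by linarith, fun {q} _ hq => ?_⟩
    rw [Phi_corner]
    calc dist (Phi q) ((1:ℝ), (0:ℝ)) ≤ rr (Phi q) := dist_le_rr _
    _ = rr q := rr_Phi q
    _ ≤ 2 * dist q ((1:ℝ), (0:ℝ)) := rr_le_dist q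
    _ < ε := by linarith
  · exact (contDiffAt_Phi (n := 0) (stripgood hp hc)).continuousAt.continuousWithinAt

lemma psi_spec {w : ℝ × ℝ} (hw : w ∈ quadrant) : Psi w ∈ strip ∧ Phi (Psi w) = w := by
  have hex : ∃ a ∈ strip, Phi a = w := surjOn_Phi hw
  exact ⟨invFunOn_mem hex, invFunOn_eq hex⟩

lemma psi_eq {w a : ℝ × ℝ} (ha : a ∈ strip) (hfa : Phi a = w) : Psi w = a := by
  have hw : w ∈ quadrant := hfa ▸ mapsTo_Phi ha
  have h := psi_spec hw
  exact injOn_Phi h.1 ha (by rw [h.2, hfa])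

lemma invOn_Psi : InvOn Psi Phi strip quadrant := bijOn_Phi.invOn_invFunOn

lemma rr_Psi {w : ℝ × ℝ} (hw : w ∈ quadrant) : rr (Psi w) = rr w := by
  conv_rhs => rw [← (psi_spec hw).2]
  rw [rr_Phi]

lemma psi_corner : Psi ((1:ℝ), (0:ℝ)) = ((1:ℝ), (0:ℝ)) :=
  psi_eq (mem_strip.2 (by norm_num)) Phi_corner

lemma continuousWithinAt_Psi_corner : ContinuousWithinAt Psi quadrant ((1:ℝ), (0:ℝ)) := by
  rw [ContinuousWithinAt, psi_corner, Metric.tendsto_nhdsWithin_nhds]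
  intro ε hε
  refine ⟨ε/2, by linarith, fun {q} hq hd => ?_⟩
  calc dist (Psi q) ((1:ℝ), (0:ℝ)) ≤ rr (Psi q) := dist_le_rr _
  _ = rr q := rr_Psi hq
  _ ≤ 2 * dist q ((1:ℝ), (0:ℝ)) := rr_le_dist q
  _ < ε := by linarith

/-- near the left edge of the quadrant, `Psi` is the identity -/
lemma psi_id_left {w : ℝ × ℝ} (hw : w ∈ quadrant) (h : w.1 < 1/200) :
    ∀ q ∈ Metric.ball w (1/200) ∩ quadrant, Psi q = q := by
  intro q ⟨hqb, hqq⟩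
  obtain ⟨hq1, hq2⟩ := mem_quadrant.1 hqq
  have hd1 : |q.1 - w.1| ≤ dist q w := by
    rw [Prod.dist_eq, Real.dist_eq]; exact le_max_left _ _
  rw [Metric.mem_ball] at hqb
  have hx : q.1 < 1/100 := by
    have := le_abs_self (q.1 - w.1)
    have : q.1 - w.1 < 1/200 := by linarith [hd1]
    linarith
  have hqs : q ∈ strip := mem_strip.2 ⟨⟨hq1, by linarith⟩, hq2⟩
  exact psi_eq hqs (Phi_id (hh_zero_U2 hqs hx))

/-- near the open bottom edge of the quadrant, `Psi` is the identity -/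
lemma psi_id_bottom {w : ℝ × ℝ} (hw : w ∈ quadrant) (h1 : w.2 = 0) (h2 : w.1 < 1)
    (ε : ℝ) (hεd : ε = min (1/100) ((1 - w.1)/7)) :
    0 < ε ∧ ∀ q ∈ Metric.ball w ε ∩ quadrant, Psi q = q := by
  have hεpos : 0 < ε := by rw [hεd]; apply lt_min <;> [norm_num; linarith]
  refine ⟨hεpos, fun q ⟨hqb, hqq⟩ => ?_⟩
  obtain ⟨hq1, hq2⟩ := mem_quadrant.1 hqq
  rw [Metric.mem_ball] at hqb
  have hd1 : |q.1 - w.1| ≤ dist q w := by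
    rw [Prod.dist_eq, Real.dist_eq]; exact le_max_left _ _
  have hd2 : |q.2 - w.2| ≤ dist q w := by
    rw [Prod.dist_eq, Real.dist_eq (x := q.2)]
    exact le_max_right _ _
  have hε1 : ε ≤ 1/100 := by rw [hεd]; exact min_le_left _ _
  have hε2 : ε ≤ (1 - w.1)/7 := by rw [hεd]; exact min_le_right _ _
  have hx : q.1 < w.1 + ε := by linarith [le_abs_self (q.1 - w.1), hd1]
  have hy : q.2 < w.2 + ε := by linarith [le_abs_self (q.2 - w.2), hd2]
  have hy5 : q.2 < 1/5 := by linarith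
  have hqs : q ∈ strip := mem_strip.2 ⟨⟨hq1, by linarith⟩, hq2⟩
  have hfar : q.1 < 1 - 5 * q.2 := by linarith
  exact psi_eq hqs (Phi_id (hh_zero_U3 hqs hy5 hfar))

/-- near the far bottom edge of the quadrant, `Psi` is the inverse rotation -/
lemma psi_rot_bottom {w : ℝ × ℝ} (hw : w ∈ quadrant) (h1 : w.2 = 0) (h2 : 1 < w.1)
    (ε : ℝ) (hεd : ε = min (1/50) ((w.1 - 1)/12)) :
    0 < ε ∧ ∀ q ∈ Metric.ball w ε ∩ quadrant, Psi q = (1 - q.2, q.1 - 1) := by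
  have hεpos : 0 < ε := by rw [hεd]; apply lt_min <;> [norm_num; linarith]
  refine ⟨hεpos, fun q ⟨hqb, hqq⟩ => ?_⟩
  obtain ⟨hq1, hq2⟩ := mem_quadrant.1 hqq
  rw [Metric.mem_ball] at hqb
  have hd1 : |q.1 - w.1| ≤ dist q w := by
    rw [Prod.dist_eq, Real.dist_eq]; exact le_max_left _ _
  have hd2 : |q.2 - w.2| ≤ dist q w := by
    rw [Prod.dist_eq, Real.dist_eq (x := q.2)]
    exact le_max_right _ _
  have hε1 : ε ≤ 1/50 := by rw [hεd]; exact min_le_left _ _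
  have hε2 : ε ≤ (w.1 - 1)/12 := by rw [hεd]; exact min_le_right _ _
  have hx : w.1 - ε < q.1 := by linarith [neg_abs_le (q.1 - w.1), hd1]
  have hy : q.2 < w.2 + ε := by linarith [le_abs_self (q.2 - w.2), hd2]
  set a : ℝ × ℝ := (1 - q.2, q.1 - 1) with hadef
  have has : a ∈ strip := by
    apply mem_strip.2
    refine ⟨⟨?_, ?_⟩, ?_⟩
    · show 0 ≤ 1 - q.2; linarith
    · show 1 - q.2 ≤ 1; linarith
    · show 0 ≤ q.1 - 1; linarith
  have hho : hh a = 1 := by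
    apply hh_one_V has
    · show 49/50 < 1 - q.2; linarith
    · show 10 * (1 - (1 - q.2)) < q.1 - 1; linarith
  apply psi_eq has
  rw [Phi_rot hho]
  exact Prod.ext (by show 1 + (q.1 - 1) = q.1; ring) (by show 1 - (1 - q.2) = q.2; ring)

lemma cdw_of_locally_eq {w : ℝ × ℝ} (hw : w ∈ quadrant) {f : ℝ × ℝ → ℝ × ℝ}
    (hf : ContDiffAt ℝ (⊤:ℕ∞) f w) {ε : ℝ} (hε : 0 < ε)
    (heq : ∀ q ∈ Metric.ball w ε ∩ quadrant, Psi q = f q) :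
    ContDiffWithinAt ℝ (⊤:ℕ∞) Psi quadrant w := by
  apply hf.contDiffWithinAt.congr_of_eventuallyEq
  · filter_upwards [inter_mem_nhdsWithin quadrant (Metric.ball_mem_nhds w hε)]
    intro q hq
    exact heq q ⟨hq.2, hq.1⟩
  · exact heq w ⟨Metric.mem_ball_self hε, hw⟩

lemma psi_cdw_left {w : ℝ × ℝ} (hw : w ∈ quadrant) (h : w.1 < 1/200) :
    ContDiffWithinAt ℝ (⊤:ℕ∞) Psi quadrant w :=
  cdw_of_locally_eq hw contDiffAt_id (by norm_num) (psi_id_left hw h)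

lemma psi_cdw_bottom {w : ℝ × ℝ} (hw : w ∈ quadrant) (h1 : w.2 = 0) (h2 : w.1 < 1) :
    ContDiffWithinAt ℝ (⊤:ℕ∞) Psi quadrant w := by
  obtain ⟨hε, heq⟩ := psi_id_bottom hw h1 h2 _ rfl
  exact cdw_of_locally_eq hw contDiffAt_id hε heq

lemma psi_cdw_rot {w : ℝ × ℝ} (hw : w ∈ quadrant) (h1 : w.2 = 0) (h2 : 1 < w.1) :
    ContDiffWithinAt ℝ (⊤:ℕ∞) Psi quadrant w := by
  obtain ⟨hε, heq⟩ := psi_rot_bottom hw h1 h2 _ rfl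
  exact cdw_of_locally_eq hw (by fun_prop) hε heq

lemma chi_eq_one {θ : ℝ} (h0 : -1 ≤ θ) (h2 : θ ≤ 2) : chi θ = 1 := by
  have a : ψ (θ + 2) = 1 := Real.smoothTransition.one_of_one_le (by linarith)
  have b : ψ (3 - θ) = 1 := Real.smoothTransition.one_of_one_le (by linarith)
  rw [chi, a, b, mul_one]

/-- the `U` of condition (c) -/
def Uset : Set (ℝ × ℝ) := {v | v.1 < 1/100} ∪ {v | v.2 < 1/5 ∧ v.1 < 1 - 5*v.2}

lemma Uset_open : IsOpen Uset := by
  apply IsOpen.union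
  · exact isOpen_lt continuous_fst continuous_const
  · exact (isOpen_lt continuous_snd continuous_const).inter
      (isOpen_lt continuous_fst (by continuity))

lemma Uset_sub : ({(0:ℝ)} ×ˢ Ici (0:ℝ)) ∪ (Ico (0:ℝ) 1 ×ˢ {(0:ℝ)}) ⊆ Uset := by
  rintro p (hp | hp)
  · left
    have : p.1 = 0 := by
      have := hp.1
      simpa using this
    show p.1 < 1/100
    rw [this]; norm_num
  · right
    have h2 : p.2 = 0 := by simpa using hp.2
    have h1 := hp.1
    rw [mem_Ico] at h1
    exact ⟨by rw [h2]; norm_num, by rw [h2]; simpa using h1.2⟩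

lemma Uset_id : ∀ p ∈ Uset ∩ strip, Phi p = p := by
  rintro p ⟨hU, hs⟩
  rcases hU with h | h
  · exact Phi_id (hh_zero_U2 hs h)
  · exact Phi_id (hh_zero_U3 hs h.1 h.2)

/-- the `V` of condition (d) -/
def Vset : Set (ℝ × ℝ) := {v | 49/50 < v.1 ∧ 10*(1 - v.1) < v.2}

lemma Vset_open : IsOpen Vset :=
  (isOpen_lt continuous_const continuous_fst).inter (isOpen_lt (by continuity) continuous_snd)

lemma Vset_sub : ({(1:ℝ)} ×ˢ Ioi (0:ℝ)) ⊆ Vset := by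
  rintro p hp
  have h1 : p.1 = 1 := by simpa using hp.1
  have h2 : (0:ℝ) < p.2 := by simpa using hp.2
  exact ⟨by rw [h1]; norm_num, by rw [h1]; simpa using h2⟩

lemma Vset_rot : ∀ p ∈ Vset ∩ strip, Phi p = (1 + p.2, 1 - p.1) := by
  rintro p ⟨hV, hs⟩
  exact Phi_rot (hh_one_V hs hV.1 hV.2)

/-- condition (e) -/
lemma cond_e : ∀ r ∈ Icc (0:ℝ) (1/2), ∀ θ ∈ Icc (0:ℝ) (π/2),
    Phi (1 - r * Real.cos θ, r * Real.sin θ) = (1 - r * Real.cos (alp θ), r * Real.sin (alp θ)) := by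
  intro r hr θ hθ
  have hπ4 := Real.pi_le_four
  have hπ0 := Real.pi_pos
  rcases eq_or_lt_of_le hr.1 with h0 | h0
  · rw [← h0]
    norm_num
    exact Phi_corner
  · have hhpt : hh (pt r θ) = sh (th2 θ) := by
      rw [hh_pt h0 hθ, gg_of_le r hr.2]
      ring
    have : Phi (pt r θ) = pt r (θ + π/2 * sh (th2 θ)) := by
      rw [Phi_pt, om, hhpt]
    rw [show (1 - r * Real.cos θ, r * Real.sin θ) = pt r θ from rfl, this]
    rw [show alp θ = θ + π/2 * sh (th2 θ) by
      rw [alp, chi_eq_one (by linarith [hθ.1]) (by linarith [hθ.2]), one_mul]]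
    rfl

lemma sqrt3_lb : (46/27:ℝ) ≤ Real.sqrt 3 := by
  have hs3 : Real.sqrt 3 ^ 2 = 3 := Real.sq_sqrt (by norm_num)
  nlinarith [Real.sqrt_nonneg 3]

lemma alp_low : ∀ t ∈ Icc (0:ℝ) (π/6), alp t = t := by
  intro t ht
  have hπ0 := Real.pi_pos
  have hπ4 := Real.pi_le_four
  have hmem : t ∈ Icc (0:ℝ) (π/2) := ⟨ht.1, by linarith [ht.2]⟩
  have hth : th2 t ≤ th2 (π/6) :=
    th2_monoOn hmem ⟨by linarith, by linarith⟩ ht.2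
  have hval : th2 (π/6) ≤ 27/100 := by
    rw [th2, Real.sin_pi_div_six, Real.cos_pi_div_six]
    rw [div_le_iff₀ (by nlinarith [Real.sqrt_nonneg 3])]
    nlinarith [sqrt3_lb]
  rw [alp, chi_eq_one (by linarith [ht.1]) (by linarith [ht.2]),
    sh_of_le _ (le_trans hth hval)]
  ring

lemma alp_high : ∀ t ∈ Icc (π/3) (π/2), alp t = t + π/2 := by
  intro t ht
  have hπ0 := Real.pi_pos
  have hπ4 := Real.pi_le_four
  have hmem : t ∈ Icc (0:ℝ) (π/2) := ⟨by linarith [ht.1], ht.2⟩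
  have hth : th2 (π/3) ≤ th2 t :=
    th2_monoOn ⟨by linarith, by linarith⟩ hmem ht.1
  have hval : (5/9:ℝ) ≤ th2 (π/3) := by
    rw [th2, Real.sin_pi_div_three, Real.cos_pi_div_three]
    rw [le_div_iff₀ (by norm_num)]
    nlinarith [sqrt3_lb]
  rw [alp, chi_eq_one (by linarith [ht.1]) (by linarith [ht.2]),
    sh_of_ge _ (le_trans hval hth)]
  ring

lemma contDiff_alp : ContDiff ℝ (⊤:ℕ∞) alp := by
  rw [contDiff_iff_contDiffAt]
  intro θ₀
  have hπ3 := Real.pi_gt_three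
  rcases lt_or_ge (3:ℝ) θ₀ with h3 | h3
  · apply ContDiffAt.congr_of_eventuallyEq contDiffAt_id
    filter_upwards [isOpen_Ioi.mem_nhds h3] with θ hθ
    have hb : ψ (3 - θ) = 0 := Real.smoothTransition.zero_of_nonpos (by simp at hθ; linarith)
    rw [alp, chi, hb, mul_zero, zero_mul, mul_zero, add_zero, id]
  rcases lt_or_ge θ₀ (-2:ℝ) with h2 | h2
  · apply ContDiffAt.congr_of_eventuallyEq contDiffAt_id
    filter_upwards [isOpen_Iio.mem_nhds h2] with θ hθ
    have hb : ψ (θ + 2) = 0 := Real.smoothTransition.zero_of_nonpos (by simp at hθ; linarith)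
    rw [alp, chi, hb, zero_mul, zero_mul, mul_zero, add_zero, id]
  -- now θ₀ ∈ [-2, 3] ⊆ (-π, π), so 1 + cos θ₀ > 0
  have hcos : 0 < 1 + Real.cos θ₀ := by
    have hhalf : θ₀/2 ∈ Ioo (-(π/2)) (π/2) := by
      constructor <;> [linarith; linarith]
    have hcpos : 0 < Real.cos (θ₀/2) := Real.cos_pos_of_mem_Ioo hhalf
    have hid : Real.cos (θ₀/2)^2 = 1/2 + Real.cos (2 * (θ₀/2))/2 := Real.cos_sq _
    rw [show 2 * (θ₀/2) = θ₀ by ring] at hid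
    nlinarith
  have hψ : ContDiff ℝ (⊤:ℕ∞) ψ := Real.smoothTransition.contDiff
  have hth2 : ContDiffAt ℝ (⊤:ℕ∞) th2 θ₀ := by
    apply ContDiffAt.div
    · exact Real.contDiff_sin.contDiffAt
    · exact contDiffAt_const.add Real.contDiff_cos.contDiffAt
    · exact ne_of_gt hcos
  have hsh : ContDiffAt ℝ (⊤:ℕ∞) (fun θ => sh (th2 θ)) θ₀ := by
    apply hψ.contDiffAt.comp
    exact (hth2.sub contDiffAt_const).mul contDiffAt_const
  have hchi : ContDiffAt ℝ (⊤:ℕ∞) chi θ₀ := by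
    apply ContDiffAt.mul
    · exact hψ.contDiffAt.comp θ₀ (by fun_prop)
    · exact hψ.contDiffAt.comp θ₀ (by fun_prop)
  exact contDiffAt_id.add (contDiffAt_const.mul (hchi.mul hsh))

lemma deriv_alp_pos : ∀ t ∈ Icc (0:ℝ) (π/2), 0 < deriv alp t := by
  intro t ht
  have hπ0 := Real.pi_pos
  have hπ4 : π < 3.15 := Real.pi_lt_d2
  have hcos0 : 0 ≤ Real.cos t := Real.cos_nonneg_of_mem_Icc ⟨by linarith [ht.1], ht.2⟩
  have hcos : 0 < 1 + Real.cos t := by linarith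
  -- alp agrees with a simpler function near t
  have hev : alp =ᶠ[𝓝 t] (fun θ => θ + π/2 * sh (th2 θ)) := by
    have hopen : Ioo (-1:ℝ) 2 ∈ 𝓝 t :=
      isOpen_Ioo.mem_nhds ⟨by linarith [ht.1], by linarith [ht.2]⟩
    filter_upwards [hopen] with θ hθ
    rw [alp, chi_eq_one (by linarith [hθ.1]) (by linarith [hθ.2]), one_mul]
  rw [hev.deriv_eq]
  -- compute the derivative of the simpler function
  have hth2d : HasDerivAt th2 (1/(1 + Real.cos t)) t := by
    have h := (Real.hasDerivAt_sin t).div ((hasDerivAt_const t 1).add (Real.hasDerivAt_cos t))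
      (ne_of_gt hcos)
    refine h.congr_deriv ?_
    have hsc := Real.sin_sq_add_cos_sq t
    simp only [Pi.add_apply]
    field_simp
    nlinarith
  have hshdiff : ∀ X : ℝ, HasDerivAt sh (deriv sh X) X := by
    intro X
    apply DifferentiableAt.hasDerivAt
    have : ContDiff ℝ 1 sh := by
      apply (Real.smoothTransition.contDiff (n := 1)).comp
      fun_prop
    exact (this.differentiable one_ne_zero).differentiableAt
  have hcomp : HasDerivAt (fun θ => sh (th2 θ)) (deriv sh (th2 t) * (1/(1 + Real.cos t))) t :=
    (hshdiff (th2 t)).comp t hth2d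
  have htot : HasDerivAt (fun θ => θ + π/2 * sh (th2 θ))
      (1 + π/2 * (deriv sh (th2 t) * (1/(1 + Real.cos t)))) t :=
    (hasDerivAt_id t).add (hcomp.const_mul (π/2))
  rw [htot.deriv]
  have hd0 : 0 ≤ deriv sh (th2 t) :=
    deriv_nonneg_of_monotoneOn (le_refl (th2 t)) (lt_add_one _)
      (sh_mono.monotoneOn _) (hshdiff _)
  have h1 : 0 < 1/(1 + Real.cos t) := by positivity
  nlinarith [mul_nonneg (by positivity : (0:ℝ) ≤ π/2) (mul_nonneg hd0 h1.le)]

lemma admissible_alp : Admissible alp :=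
  ⟨contDiff_alp, deriv_alp_pos, alp_low, alp_high⟩
/-- explicit 2x2 continuous linear map -/
noncomputable def mk2 (a b c d : ℝ) : (ℝ × ℝ) →L[ℝ] (ℝ × ℝ) :=
  ((a • ContinuousLinearMap.fst ℝ ℝ ℝ) + (b • ContinuousLinearMap.snd ℝ ℝ ℝ)).prod
    ((c • ContinuousLinearMap.fst ℝ ℝ ℝ) + (d • ContinuousLinearMap.snd ℝ ℝ ℝ))

lemma mk2_apply (a b c d : ℝ) (v : ℝ × ℝ) :
    mk2 a b c d v = (a * v.1 + b * v.2, c * v.1 + d * v.2) := by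
  simp [mk2, smul_eq_mul]

/-- an invertible 2x2 matrix as a continuous linear equivalence -/
noncomputable def clmEquivOfDet (a b c d : ℝ) (h : a * d - b * c ≠ 0) :
    (ℝ × ℝ) ≃L[ℝ] (ℝ × ℝ) :=
  ContinuousLinearEquiv.equivOfInverse (mk2 a b c d)
    (mk2 (d/(a*d - b*c)) (-b/(a*d - b*c)) (-c/(a*d - b*c)) (a/(a*d - b*c)))
    (fun v => by
      rw [mk2_apply, mk2_apply]
      refine Prod.ext ?_ ?_ <;> simp only [div_eq_mul_inv]
      · linear_combination v.1 * mul_inv_cancel₀ h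
      · linear_combination v.2 * mul_inv_cancel₀ h)
    (fun v => by
      rw [mk2_apply, mk2_apply]
      refine Prod.ext ?_ ?_ <;> simp only [div_eq_mul_inv]
      · linear_combination v.1 * mul_inv_cancel₀ h
      · linear_combination v.2 * mul_inv_cancel₀ h)

lemma coe_clmEquivOfDet (a b c d : ℝ) (h : a * d - b * c ≠ 0) :
    (clmEquivOfDet a b c d h : (ℝ × ℝ) →L[ℝ] (ℝ × ℝ)) = mk2 a b c d := rfl

lemma fderiv_decomp (D : (ℝ × ℝ) →L[ℝ] ℝ) (v : ℝ × ℝ) :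
    D v = v.1 * D (1, 0) + v.2 * D (0, 1) := by
  have h : v = v.1 • ((1:ℝ), (0:ℝ)) + v.2 • ((0:ℝ), (1:ℝ)) := by
    refine Prod.ext ?_ ?_ <;> simp
  conv_lhs => rw [h]
  rw [map_add, map_smul, map_smul, smul_eq_mul, smul_eq_mul]

lemma hasFDerivAt_Phi {p : ℝ × ℝ} (h : p.1 < 1 ∨ p.2 ≠ 0) :
    HasFDerivAt Phi (mk2
      (Real.cos (om p) + ((1 - p.1) * Real.sin (om p) + p.2 * Real.cos (om p)) * (fderiv ℝ om p (1, 0)))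
      (Real.sin (om p) + ((1 - p.1) * Real.sin (om p) + p.2 * Real.cos (om p)) * (fderiv ℝ om p (0, 1)))
      (-Real.sin (om p) + ((1 - p.1) * Real.cos (om p) - p.2 * Real.sin (om p)) * (fderiv ℝ om p (1, 0)))
      (Real.cos (om p) + ((1 - p.1) * Real.cos (om p) - p.2 * Real.sin (om p)) * (fderiv ℝ om p (0, 1)))) p := by
  set D := fderiv ℝ om p with hD
  have hom : HasFDerivAt om D p :=
    ((contDiffAt_om (n := 1) h).differentiableAt one_ne_zero).hasFDerivAt
  have hcos : HasFDerivAt (fun v => Real.cos (om v)) ((-Real.sin (om p)) • D) p :=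
    (Real.hasDerivAt_cos (om p)).comp_hasFDerivAt p hom
  have hsin : HasFDerivAt (fun v => Real.sin (om v)) ((Real.cos (om p)) • D) p :=
    (Real.hasDerivAt_sin (om p)).comp_hasFDerivAt p hom
  have h1 : HasFDerivAt (fun v : ℝ × ℝ => 1 - v.1) (-(ContinuousLinearMap.fst ℝ ℝ ℝ)) p :=
    hasFDerivAt_fst.const_sub 1
  have h2 : HasFDerivAt (fun v : ℝ × ℝ => v.2) (ContinuousLinearMap.snd ℝ ℝ ℝ) p :=
    hasFDerivAt_snd
  have hc1 := ((h1.mul hcos).sub (h2.mul hsin)).const_sub 1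
  have hc2 := (h1.mul hsin).add (h2.mul hcos)
  have hfull := hc1.prodMk hc2
  refine hfull.congr_fderiv ?_
  refine ContinuousLinearMap.ext fun v => ?_
  rw [mk2_apply]
  simp only [ContinuousLinearMap.prod_apply, ContinuousLinearMap.add_apply,
    ContinuousLinearMap.coe_sub', Pi.sub_apply, ContinuousLinearMap.smul_apply,
    ContinuousLinearMap.neg_apply, ContinuousLinearMap.coe_fst', ContinuousLinearMap.coe_snd',
    smul_eq_mul]
  rw [fderiv_decomp D v]
  refine Prod.ext ?_ ?_ <;> simp only <;> ring

lemma psi_contDiffAt_interior {p : ℝ × ℝ} (hx0 : 0 < p.1) (hx1 : p.1 < 1) (hy : 0 < p.2) :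
    ContDiffAt ℝ (⊤:ℕ∞) Psi (Phi p) := by
  have hgood : p.1 < 1 ∨ p.2 ≠ 0 := Or.inl hx1
  have hps : p ∈ strip := mem_strip.2 ⟨⟨hx0.le, hx1.le⟩, hy.le⟩
  have hr : 0 < rr p := (good_pt hgood).1
  set C := Real.cos (om p) with hC
  set S := Real.sin (om p) with hS
  set P := (1 : ℝ) - p.1 with hP
  set Q := p.2 with hQ
  set ω₁ := fderiv ℝ om p (1, 0) with hω₁
  set ω₂ := fderiv ℝ om p (0, 1) with hω₂
  -- the angle of p
  have hθmem := ang_mem hps hr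
  have hθpos : 0 < ang p := Real.arcsin_pos.2 (div_pos hy hr)
  have hθlt : ang p < π/2 := by
    rcases lt_or_eq_of_le hθmem.2 with h | h
    · exact h
    · exfalso
      have hc := cos_ang hps hr
      rw [h, Real.cos_pi_div_two] at hc
      have h2 : 0 < (1 - p.1)/rr p := div_pos (by linarith) hr
      rw [← hc] at h2
      linarith
  -- derivative of the circle parametrization
  have hpt' : HasDerivAt (fun ϑ => pt (rr p) ϑ) ((Q : ℝ), (P : ℝ)) (ang p) := by
    have hsin := sin_ang hps hr
    have hcos := cos_ang hps hr
    have hfst : HasDerivAt (fun ϑ => (1:ℝ) - rr p * Real.cos ϑ) Q (ang p) := by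
      have := ((Real.hasDerivAt_cos (ang p)).const_mul (rr p)).const_sub 1
      refine this.congr_deriv ?_
      rw [hsin]
      field_simp
      rfl
    have hsnd : HasDerivAt (fun ϑ => rr p * Real.sin ϑ) P (ang p) := by
      have := (Real.hasDerivAt_sin (ang p)).const_mul (rr p)
      refine this.congr_deriv ?_
      rw [hcos]
      field_simp
      rfl
    exact hfst.prodMk hsnd
  have homD : HasFDerivAt om (fderiv ℝ om p) p :=
    ((contDiffAt_om (n := 1) hgood).differentiableAt one_ne_zero).hasFDerivAt
  have homD' : HasFDerivAt om (fderiv ℝ om p) (pt (rr p) (ang p)) := by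
    rw [pt_ang hps hr]; exact homD
  have hG : HasDerivAt (fun ϑ => om (pt (rr p) ϑ)) (fderiv ℝ om p (Q, P)) (ang p) :=
    homD'.comp_hasDerivAt (ang p) hpt'
  have hDQP : 0 ≤ fderiv ℝ om p (Q, P) :=
    deriv_nonneg_of_monotoneOn hθmem.1 hθlt (om_pt_monoOn hr) hG
  have hdec : fderiv ℝ om p (Q, P) = Q * ω₁ + P * ω₂ := fderiv_decomp _ _
  -- the determinant is positive
  have hCS : S^2 + C^2 = 1 := Real.sin_sq_add_cos_sq (om p)
  have hdet : (C + (P*S + Q*C) * ω₁) * (C + (P*C - Q*S) * ω₂)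
      - (S + (P*S + Q*C) * ω₂) * (-S + (P*C - Q*S) * ω₁)
      = 1 + (Q * ω₁ + P * ω₂) := by
    linear_combination (1 + Q * ω₁ + P * ω₂) * hCS
  have hdetpos : 0 < (C + (P*S + Q*C) * ω₁) * (C + (P*C - Q*S) * ω₂)
      - (S + (P*S + Q*C) * ω₂) * (-S + (P*C - Q*S) * ω₁) := by
    rw [hdet, ← hdec]
    linarith
  have hdne := ne_of_gt hdetpos
  have hA : HasFDerivAt Phi
      ((clmEquivOfDet _ _ _ _ hdne : (ℝ × ℝ) ≃L[ℝ] (ℝ × ℝ)) : (ℝ × ℝ) →L[ℝ] (ℝ × ℝ)) p := by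
    rw [coe_clmEquivOfDet]
    exact hasFDerivAt_Phi hgood
  have hcd : ContDiffAt ℝ (⊤:ℕ∞) Phi p := contDiffAt_Phi hgood
  have h1n : ((⊤:ℕ∞) : WithTop ℕ∞) ≠ 0 := by simp
  have hL : ContDiffAt ℝ (⊤:ℕ∞) (hcd.localInverse hA h1n) (Phi p) :=
    hcd.to_localInverse hA h1n
  have hst : HasStrictFDerivAt Phi
      ((clmEquivOfDet _ _ _ _ hdne : (ℝ × ℝ) ≃L[ℝ] (ℝ × ℝ)) : (ℝ × ℝ) →L[ℝ] (ℝ × ℝ)) p :=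
    hcd.hasStrictFDerivAt' hA h1n
  have hev1 : ∀ᶠ w in 𝓝 (Phi p), Phi ((hcd.localInverse hA h1n) w) = w :=
    hst.eventually_right_inverse
  have htd : Tendsto (hcd.localInverse hA h1n) (𝓝 (Phi p)) (𝓝 p) := by
    have h := hL.continuousAt
    rwa [ContinuousAt, hcd.localInverse_apply_image hA h1n] at h
  have hopen : IsOpen {v : ℝ × ℝ | 0 < v.1 ∧ v.1 < 1 ∧ 0 < v.2} := by
    apply IsOpen.inter (isOpen_lt continuous_const continuous_fst)
    exact (isOpen_lt continuous_fst continuous_const).inter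
      (isOpen_lt continuous_const continuous_snd)
  have hev2 : ∀ᶠ w in 𝓝 (Phi p), (hcd.localInverse hA h1n) w ∈
      {v : ℝ × ℝ | 0 < v.1 ∧ v.1 < 1 ∧ 0 < v.2} :=
    htd.eventually (hopen.mem_nhds ⟨hx0, hx1, hy⟩)
  have hfinal : Psi =ᶠ[𝓝 (Phi p)] (hcd.localInverse hA h1n) := by
    filter_upwards [hev1, hev2] with w h1 h2
    exact psi_eq (mem_strip.2 ⟨⟨h2.1.le, h2.2.1.le⟩, h2.2.2.le⟩) h1
  exact hL.congr_of_eventuallyEq hfinal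

lemma psi_contDiffAt_interior' {w : ℝ × ℝ} (hw : w ∈ quadrant) (h1 : 0 < w.1) (h2 : 0 < w.2) :
    ContDiffAt ℝ (⊤:ℕ∞) Psi w := by
  obtain ⟨p, hps, hp⟩ := surjOn_Phi hw
  obtain ⟨⟨hx0, hx1⟩, hy0⟩ := mem_strip.1 hps
  have hnc : p ≠ ((1:ℝ), (0:ℝ)) := by
    intro hc
    rw [hc, Phi_corner] at hp
    rw [← hp] at h2
    norm_num at h2
  have hxlt : p.1 < 1 := by
    rcases lt_or_eq_of_le hx1 with h | h
    · exact h
    · exfalso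
      have hy2 : 0 < p.2 := by
        rcases eq_or_lt_of_le hy0 with h' | h'
        · exact absurd (Prod.ext h h'.symm) hnc
        · exact h'
      have : Phi p = (1 + p.2, 1 - p.1) :=
        Phi_rot (hh_one_V hps (by rw [h]; norm_num) (by rw [h]; simpa using hy2))
      rw [this] at hp
      have : w.2 = 1 - p.1 := by rw [← hp]
      rw [h] at this
      rw [this] at h2
      norm_num at h2
  have hxpos : 0 < p.1 := by
    rcases eq_or_lt_of_le hx0 with h | h
    · exfalso
      have : Phi p = p := Phi_id (hh_zero_U2 hps (by rw [← h]; norm_num))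
      rw [this] at hp
      rw [← hp] at h1
      rw [← h] at h1
      norm_num at h1
    · exact h
  have hypos : 0 < p.2 := by
    rcases eq_or_lt_of_le hy0 with h | h
    · exfalso
      have : Phi p = p := Phi_id (hh_zero_U3 hps (by rw [← h]; norm_num) (by rw [← h]; linarith))
      rw [this] at hp
      rw [← hp] at h2
      rw [← h] at h2
      norm_num at h2
    · exact h
  rw [← hp]
  exact psi_contDiffAt_interior hxpos hxlt hypos

lemma psi_cdw_all {w : ℝ × ℝ} (hw : w ∈ quadrant) (hne : w ≠ ((1:ℝ), (0:ℝ))) :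
    ContDiffWithinAt ℝ (⊤:ℕ∞) Psi quadrant w := by
  obtain ⟨hw1, hw2⟩ := mem_quadrant.1 hw
  rcases eq_or_lt_of_le hw2 with h2 | h2
  · -- bottom edge
    have hne1 : w.1 ≠ 1 := by
      intro hc
      exact hne (Prod.ext hc h2.symm)
    rcases lt_or_gt_of_ne hne1 with h | h
    · exact psi_cdw_bottom hw h2.symm h
    · exact psi_cdw_rot hw h2.symm h
  · rcases eq_or_lt_of_le hw1 with h1 | h1
    · exact psi_cdw_left hw (by rw [← h1]; norm_num)
    · exact (psi_contDiffAt_interior' hw h1 h2).contDiffWithinAt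

lemma contDiffOn_Psi : ContDiffOn ℝ (⊤:ℕ∞) Psi (quadrant \ {((1:ℝ), (0:ℝ))}) := by
  intro w hw
  exact (psi_cdw_all hw.1 (by simpa using hw.2)).mono diff_subset

lemma continuousOn_Psi : ContinuousOn Psi quadrant := by
  intro w hw
  rcases eq_or_ne w ((1:ℝ), (0:ℝ)) with hc | hc
  · rw [hc]
    exact continuousWithinAt_Psi_corner
  · exact (psi_cdw_all hw hc).continuousWithinAt



/-- Existence of a corner-straightening map: a map `Φ` restricting to a
homeomorphism from `Q₁ = [0,1] × ℝ₊` onto `Q = ℝ₊ × ℝ₊`, a diffeomorphism away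
from the corner point `(1, 0)` (in the sense of `ContDiffOn`), equal to the
identity on a relatively open subset of `Q₁` containing
`({0} × [0,∞)) ∪ ([0,1) × {0})`, equal to the clockwise rotation by `π/2`
about `(1, 0)` on a relatively open subset of `Q₁` containing `{1} × (0,∞)`,
and which near `(1, 0)` preserves the radial coordinate and rescales the angle
by an admissible diffeomorphism `α : [0, π/2] → [0, π]`. -/
theorem exists_corner_straightening_map :
    ∃ (Φ Ψ : ℝ × ℝ → ℝ × ℝ) (α : ℝ → ℝ), Admissible α ∧
      BijOn Φ strip quadrant ∧
      ContinuousOn Φ strip ∧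
      InvOn Ψ Φ strip quadrant ∧
      ContinuousOn Ψ quadrant ∧
      ContDiffOn ℝ (⊤ : ℕ∞) Φ (strip \ {((1 : ℝ), (0 : ℝ))}) ∧
      ContDiffOn ℝ (⊤ : ℕ∞) Ψ (quadrant \ {((1 : ℝ), (0 : ℝ))}) ∧
      (∃ U : Set (ℝ × ℝ), IsOpen U ∧
        ({(0 : ℝ)} ×ˢ Ici (0 : ℝ)) ∪ (Ico (0 : ℝ) 1 ×ˢ {(0 : ℝ)}) ⊆ U ∧
        ∀ p ∈ U ∩ strip, Φ p = p) ∧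
      (∃ V : Set (ℝ × ℝ), IsOpen V ∧
        ({(1 : ℝ)} ×ˢ Ioi (0 : ℝ)) ⊆ V ∧
        ∀ p ∈ V ∩ strip, Φ p = (1 + p.2, 1 - p.1)) ∧
      (∃ δ : ℝ, 0 < δ ∧ ∀ r ∈ Icc (0 : ℝ) δ, ∀ θ ∈ Icc (0 : ℝ) (π / 2),
        Φ (1 - r * cos θ, r * sin θ) = (1 - r * cos (α θ), r * sin (α θ))) := by
  exact ⟨Phi, Psi, alp, admissible_alp, bijOn_Phi, continuousOn_Phi, invOn_Psi,
    continuousOn_Psi, contDiffOn_Phi, contDiffOn_Psi,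
    ⟨Uset, Uset_open, Uset_sub, Uset_id⟩,
    ⟨Vset, Vset_open, Vset_sub, Vset_rot⟩,
    ⟨1/2, by norm_num, cond_e⟩⟩
end
end

section
/- Let Φ and Φ' be two corner-straightening maps (each satisfying conditions (a)–(e), possibly with different admissible functions α, α' and different data U, V, δ). Define H : Q → Q on Q := [0,∞) × [0,∞) by H(Φ(p)) = Φ'(p) for p ∈ Q₁ := [0,1] × [0,∞); that is, H = Φ' ∘ Φ⁻¹. Then: (i) H is a bijection from Q onto Q, continuous with continuous inverse; (ii) H and its inverse are C^∞ on Q ∖ {(1,0)} (in the sense of ContDiffOn); (iii) H fixes the boundary of Q pointwise, i.e., H(p) = p for every p ∈ ({0} × [0,∞)) ∪ ([0,∞) × {0}); (iv) there exist ε > 0 and a C^∞ function β : ℝ → ℝ with deriv β φ > 0 for all φ ∈ [0, π], β(φ) = φ for all φ ∈ [0, π/6] ∪ [5π/6, π], such that H(1 − r·cos φ, r·sin φ) = (1 − r·cos(β(φ)), r·sin(β(φ))) for all r ∈ [0, ε] and φ ∈ [0, π]. -/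
open Real Set

/-- A *corner-straightening map*: a map `Φ` restricting to a homeomorphism from
`Q₁ = [0,1] × ℝ₊` onto `Q = ℝ₊ × ℝ₊`, a diffeomorphism away from `(1, 0)` (in
the sense of `ContDiffOn`), equal to the identity on a relatively open subset
of `Q₁` containing `({0} × [0,∞)) ∪ ([0,1) × {0})`, equal to the clockwise
rotation by `π/2` about `(1, 0)` on a relatively open subset of `Q₁` containing
`{1} × (0,∞)`, and which near `(1, 0)` preserves the radial coordinate and
rescales the angle by an admissible `α`. -/
def CornerStraightening (Φ : ℝ × ℝ → ℝ × ℝ) : Prop :=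
  ∃ (Ψ : ℝ × ℝ → ℝ × ℝ) (α : ℝ → ℝ), Admissible α ∧
    BijOn Φ strip quadrant ∧
    ContinuousOn Φ strip ∧
    InvOn Ψ Φ strip quadrant ∧
    ContinuousOn Ψ quadrant ∧
    ContDiffOn ℝ (⊤ : ℕ∞) Φ (strip \ {((1 : ℝ), (0 : ℝ))}) ∧
    ContDiffOn ℝ (⊤ : ℕ∞) Ψ (quadrant \ {((1 : ℝ), (0 : ℝ))}) ∧
    (∃ U : Set (ℝ × ℝ), IsOpen U ∧
      ({(0 : ℝ)} ×ˢ Ici (0 : ℝ)) ∪ (Ico (0 : ℝ) 1 ×ˢ {(0 : ℝ)}) ⊆ U ∧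
      ∀ p ∈ U ∩ strip, Φ p = p) ∧
    (∃ V : Set (ℝ × ℝ), IsOpen V ∧
      ({(1 : ℝ)} ×ˢ Ioi (0 : ℝ)) ⊆ V ∧
      ∀ p ∈ V ∩ strip, Φ p = (1 + p.2, 1 - p.1)) ∧
    (∃ δ : ℝ, 0 < δ ∧ ∀ r ∈ Icc (0 : ℝ) δ, ∀ θ ∈ Icc (0 : ℝ) (π / 2),
      Φ (1 - r * cos θ, r * sin θ) = (1 - r * cos (α θ), r * sin (α θ)))

noncomputable section CornerAux

private lemma one_le_top' : ((⊤ : ℕ∞) : WithTop ℕ∞) ≠ 0 := by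
  simp

/-- Global extension of an admissible `α` to a diffeomorphism of `ℝ`. -/
def abar (α : ℝ → ℝ) : ℝ → ℝ := fun t =>
  if t < π / 6 then t else if π / 3 < t then t + π / 2 else α t

variable {α : ℝ → ℝ}

lemma abar_eq (hα : Admissible α) {t : ℝ} (ht : t ∈ Icc 0 (π / 2)) : abar α t = α t := by
  unfold abar
  split_ifs with h1 h2
  · exact (hα.2.2.1 t ⟨ht.1, h1.le⟩).symm
  · exact (hα.2.2.2 t ⟨h2.le, ht.2⟩).symm
  · rfl

lemma abar_eqOn_lo : EqOn (abar α) id (Iio (π / 6)) := fun t ht => if_pos ht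

lemma abar_eqOn_hi : EqOn (abar α) (fun t => t + π / 2) (Ioi (π / 3)) := by
  intro t ht
  have hpi := pi_pos
  have h2 : π / 3 < t := ht
  have h1 : ¬ t < π / 6 := by intro h; linarith
  simp only [abar]
  rw [if_neg h1, if_pos h2]

lemma abar_eqOn_mid (hα : Admissible α) : EqOn (abar α) α (Ioo 0 (π / 2)) := fun t ht =>
  abar_eq hα ⟨ht.1.le, ht.2.le⟩

lemma abar_contDiff (hα : Admissible α) : ContDiff ℝ (⊤ : ℕ∞) (abar α) := by
  rw [contDiff_iff_contDiffAt]
  intro t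
  have hpi := pi_pos
  rcases lt_or_ge t (π / 6) with h1 | h1
  · exact contDiffAt_id.congr_of_eventuallyEq
      (Filter.eventuallyEq_of_mem (isOpen_Iio.mem_nhds h1) abar_eqOn_lo)
  rcases lt_or_ge (π / 3) t with h2 | h2
  · exact ((contDiff_id.add contDiff_const).contDiffAt).congr_of_eventuallyEq
      (Filter.eventuallyEq_of_mem (isOpen_Ioi.mem_nhds h2) abar_eqOn_hi)
  · have ht : t ∈ Ioo 0 (π / 2) := ⟨by linarith, by linarith⟩
    exact (hα.1.contDiffAt).congr_of_eventuallyEq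
      (Filter.eventuallyEq_of_mem (isOpen_Ioo.mem_nhds ht) (abar_eqOn_mid hα))

lemma deriv_abar_pos (hα : Admissible α) (t : ℝ) : 0 < deriv (abar α) t := by
  have hpi := pi_pos
  rcases lt_or_ge t (π / 6) with h1 | h1
  · have : deriv (abar α) t = deriv (id : ℝ → ℝ) t :=
      Filter.EventuallyEq.deriv_eq
        (Filter.eventuallyEq_of_mem (isOpen_Iio.mem_nhds h1) abar_eqOn_lo)
    rw [this, deriv_id]; norm_num
  rcases lt_or_ge (π / 3) t with h2 | h2
  · have : deriv (abar α) t = deriv (fun t : ℝ => t + π / 2) t :=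
      Filter.EventuallyEq.deriv_eq
        (Filter.eventuallyEq_of_mem (isOpen_Ioi.mem_nhds h2) abar_eqOn_hi)
    rw [this]; simp
  · have ht : t ∈ Ioo 0 (π / 2) := ⟨by linarith, by linarith⟩
    have : deriv (abar α) t = deriv α t :=
      Filter.EventuallyEq.deriv_eq
        (Filter.eventuallyEq_of_mem (isOpen_Ioo.mem_nhds ht) (abar_eqOn_mid hα))
    rw [this]
    exact hα.2.1 t ⟨ht.1.le, ht.2.le⟩

lemma abar_strictMono (hα : Admissible α) : StrictMono (abar α) :=
  strictMono_of_deriv_pos (deriv_abar_pos hα)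

lemma abar_surjective (hα : Admissible α) : Function.Surjective (abar α) := by
  intro y
  have hpi := pi_pos
  set a := min y 0 with ha
  set b := max y π with hb
  have hab : a ≤ b := le_trans (min_le_right _ _) (le_trans hpi.le (le_max_right _ _))
  have haa : abar α a = a := if_pos (by have := min_le_right y 0; simp only [ha]; linarith)
  have hbb : abar α b = b + π / 2 := by
    have hbπ : π / 3 < b := by have := le_max_right y π; linarith
    have h1 : ¬ b < π / 6 := by intro h; linarith
    simp only [abar, if_neg h1, if_pos hbπ]
  have hy : y ∈ Icc (abar α a) (abar α b) := by
    rw [haa, hbb]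
    exact ⟨min_le_left _ _, by have := le_max_left y π; linarith⟩
  obtain ⟨x, _, hx⟩ := intermediate_value_Icc hab ((abar_contDiff hα).continuous.continuousOn) hy
  exact ⟨x, hx⟩

lemma exists_ginv (hα : Admissible α) :
    ∃ g : ℝ → ℝ, (∀ x, g (abar α x) = x) ∧ (∀ y, abar α (g y) = y) ∧
      ContDiff ℝ (⊤ : ℕ∞) g ∧ ∀ y, HasDerivAt g (deriv (abar α) (g y))⁻¹ y := by
  have hbij : Function.Bijective (abar α) :=
    ⟨(abar_strictMono hα).injective, abar_surjective hα⟩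
  set e := Equiv.ofBijective (abar α) hbij with he
  refine ⟨e.symm, fun x => e.symm_apply_apply x, fun y => e.apply_symm_apply y, ?_, ?_⟩
  all_goals
    have key : ∀ x : ℝ, ContDiffAt ℝ (⊤ : ℕ∞) e.symm (abar α x) ∧
        HasDerivAt (⇑e.symm) (deriv (abar α) x)⁻¹ (abar α x) := by
      intro x
      have hd0 : deriv (abar α) x ≠ 0 := (deriv_abar_pos hα x).ne'
      have hcd : ContDiffAt ℝ (⊤ : ℕ∞) (abar α) x := (abar_contDiff hα).contDiffAt
      have hda : HasDerivAt (abar α) (deriv (abar α) x) x :=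
        (hcd.differentiableAt one_le_top').hasDerivAt
      have hsd : HasStrictDerivAt (abar α) (deriv (abar α) x) x :=
        hcd.hasStrictDerivAt one_le_top'
      have hgf : ∀ᶠ z in nhds x, e.symm (abar α z) = z :=
        Filter.Eventually.of_forall (fun z => e.symm_apply_apply z)
      constructor
      · have hfd : HasFDerivAt (abar α)
            ((ContinuousLinearEquiv.unitsEquivAut ℝ (Units.mk0 _ hd0) : ℝ ≃L[ℝ] ℝ) : ℝ →L[ℝ] ℝ) x :=
          hda.hasFDerivAt_equiv hd0
        have hloc : ContDiffAt ℝ (⊤ : ℕ∞) (hcd.localInverse hfd one_le_top') (abar α x) :=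
          hcd.to_localInverse hfd one_le_top'
        have heq : ∀ᶠ y' in nhds (abar α x),
            e.symm y' = (hcd.hasStrictFDerivAt' hfd one_le_top').localInverse _ _ _ y' :=
          (hcd.hasStrictFDerivAt' hfd one_le_top').localInverse_unique hgf
        exact hloc.congr_of_eventuallyEq heq
      · exact (hsd.to_local_left_inverse hd0 hgf).hasDerivAt
  · rw [contDiff_iff_contDiffAt]
    intro y
    have hy : abar α (e.symm y) = y := e.apply_symm_apply y
    have := (key (e.symm y)).1
    rwa [hy] at this
  · intro y
    have hy : abar α (e.symm y) = y := e.apply_symm_apply y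
    have := (key (e.symm y)).2
    rwa [hy] at this

lemma exists_beta {α' : ℝ → ℝ} (hα : Admissible α) (hα' : Admissible α') :
    ∃ β g : ℝ → ℝ, ContDiff ℝ (⊤ : ℕ∞) β ∧
      (∀ φ ∈ Icc (0 : ℝ) π, 0 < deriv β φ) ∧
      (∀ φ ∈ Icc (0 : ℝ) (π / 6) ∪ Icc (5 * π / 6) π, β φ = φ) ∧
      (∀ φ ∈ Icc (0 : ℝ) π, g φ ∈ Icc (0 : ℝ) (π / 2) ∧ α (g φ) = φ ∧ β φ = α' (g φ)) := by
  have hpi := pi_pos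
  obtain ⟨g, hgl, hgr, hgsm, hgd⟩ := exists_ginv hα
  have hmono := abar_strictMono hα
  have habar0 : abar α 0 = 0 := by
    rw [abar_eq hα ⟨le_refl 0, by linarith⟩]
    exact hα.2.2.1 0 ⟨le_refl 0, by linarith⟩
  have habarπ2 : abar α (π / 2) = π := by
    rw [abar_eq hα ⟨by linarith, le_refl _⟩, hα.2.2.2 (π / 2) ⟨by linarith, le_refl _⟩]
    ring
  have hgmem : ∀ φ ∈ Icc (0 : ℝ) π, g φ ∈ Icc (0 : ℝ) (π / 2) := by
    intro φ hφ
    constructor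
    · rw [← hmono.le_iff_le, habar0, hgr]; exact hφ.1
    · rw [← hmono.le_iff_le, habarπ2, hgr]; exact hφ.2
  refine ⟨fun φ => α' (g φ), g, hα'.1.comp hgsm, ?_, ?_, ?_⟩
  · intro φ hφ
    have hd1 : HasDerivAt α' (deriv α' (g φ)) (g φ) :=
      ((hα'.1.contDiffAt).differentiableAt one_le_top').hasDerivAt
    have hcomp : HasDerivAt (fun φ => α' (g φ))
        (deriv α' (g φ) * (deriv (abar α) (g φ))⁻¹) φ := hd1.comp φ (hgd φ)
    rw [hcomp.deriv]
    exact mul_pos (hα'.2.1 _ (hgmem φ hφ)) (inv_pos.2 (deriv_abar_pos hα _))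
  · rintro φ (hφ | hφ)
    · have habarφ : abar α φ = φ := by
        rw [abar_eq hα ⟨hφ.1, by linarith [hφ.2]⟩]
        exact hα.2.2.1 φ hφ
      have hgφ := hgl φ
      rw [habarφ] at hgφ
      show α' (g φ) = φ
      rw [hgφ, hα'.2.2.1 φ hφ]
    · have ht : φ - π / 2 ∈ Icc (π / 3) (π / 2) := ⟨by linarith [hφ.1], by linarith [hφ.2]⟩
      have habart : abar α (φ - π / 2) = φ := by
        rw [abar_eq hα ⟨by linarith [ht.1], ht.2⟩, hα.2.2.2 _ ht]; ring
      have hgφ := hgl (φ - π / 2)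
      rw [habart] at hgφ
      show α' (g φ) = φ
      rw [hgφ, hα'.2.2.2 _ ht]; ring
  · intro φ hφ
    refine ⟨hgmem φ hφ, ?_, rfl⟩
    rw [← abar_eq hα (hgmem φ hφ)]
    exact hgr φ

end CornerAux


/-- Comparison of two corner-straightening maps `Φ`, `Φ'`: the map `H = Φ' ∘ Φ⁻¹`
(characterized by `H (Φ p) = Φ' p` for `p ∈ Q₁`) is a homeomorphism of the
quadrant `Q`, a diffeomorphism away from `(1, 0)` (in the sense of
`ContDiffOn`), fixes the boundary of `Q` pointwise, and near `(1, 0)` preserves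
the radial coordinate and rescales the angle by a self-diffeomorphism `β` of
`[0, π]` which is the identity on `[0, π/6]` and on `[5π/6, π]`. -/
theorem corner_straightening_comparison
    (Φ Φ' : ℝ × ℝ → ℝ × ℝ)
    (hΦ : CornerStraightening Φ) (hΦ' : CornerStraightening Φ')
    (H : ℝ × ℝ → ℝ × ℝ) (hH : ∀ p ∈ strip, H (Φ p) = Φ' p) :
    BijOn H quadrant quadrant ∧
    ContinuousOn H quadrant ∧
    (∃ K : ℝ × ℝ → ℝ × ℝ,
      InvOn K H quadrant quadrant ∧
      ContinuousOn K quadrant ∧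
      ContDiffOn ℝ (⊤ : ℕ∞) K (quadrant \ {((1 : ℝ), (0 : ℝ))})) ∧
    ContDiffOn ℝ (⊤ : ℕ∞) H (quadrant \ {((1 : ℝ), (0 : ℝ))}) ∧
    (∀ p ∈ ({(0 : ℝ)} ×ˢ Ici (0 : ℝ)) ∪ (Ici (0 : ℝ) ×ˢ {(0 : ℝ)}), H p = p) ∧
    (∃ ε : ℝ, 0 < ε ∧ ∃ β : ℝ → ℝ, ContDiff ℝ (⊤ : ℕ∞) β ∧
      (∀ φ ∈ Icc (0 : ℝ) π, 0 < deriv β φ) ∧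
      (∀ φ ∈ Icc (0 : ℝ) (π / 6) ∪ Icc (5 * π / 6) π, β φ = φ) ∧
      ∀ r ∈ Icc (0 : ℝ) ε, ∀ φ ∈ Icc (0 : ℝ) π,
        H (1 - r * cos φ, r * sin φ) = (1 - r * cos (β φ), r * sin (β φ))) := by
  obtain ⟨Ψ, α, hα, hbij, hcont, hinv, hΨcont, hsm, hΨsm,
    ⟨U, hUopen, hUsub, hUid⟩, ⟨V, hVopen, hVsub, hVrot⟩, δ, hδpos, hδ⟩ := hΦ
  obtain ⟨Ψ', α', hα', hbij', hcont', hinv', hΨcont', hsm', hΨsm',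
    ⟨U', hUopen', hUsub', hUid'⟩, ⟨V', hVopen', hVsub', hVrot'⟩, δ', hδpos', hδ'⟩ := hΦ'
  have hpi := pi_pos
  have hΨbij : BijOn Ψ quadrant strip := Set.BijOn.symm hinv.symm hbij
  have hΨbij' : BijOn Ψ' quadrant strip := Set.BijOn.symm hinv'.symm hbij'
  have hΨmaps : MapsTo Ψ quadrant strip := hΨbij.mapsTo
  have hΨmaps' : MapsTo Ψ' quadrant strip := hΨbij'.mapsTo
  have hΦΨ : ∀ q ∈ quadrant, Φ (Ψ q) = q := hinv.2
  have hΦΨ' : ∀ q ∈ quadrant, Φ' (Ψ' q) = q := hinv'.2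
  have hΨΦ' : ∀ p ∈ strip, Ψ' (Φ' p) = p := hinv'.1
  have hHeq : EqOn H (Φ' ∘ Ψ) quadrant := by
    intro q hq
    show H q = Φ' (Ψ q)
    calc H q = H (Φ (Ψ q)) := by rw [hΦΨ q hq]
      _ = Φ' (Ψ q) := hH _ (hΨmaps hq)
  have hcornerstrip : ((1 : ℝ), (0 : ℝ)) ∈ strip := ⟨⟨zero_le_one, le_refl 1⟩, self_mem_Ici⟩
  have hΦc : Φ (1, 0) = (1, 0) := by
    have := hδ 0 ⟨le_refl 0, hδpos.le⟩ 0 ⟨le_refl 0, by linarith⟩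
    simpa using this
  have hΦc' : Φ' (1, 0) = (1, 0) := by
    have := hδ' 0 ⟨le_refl 0, hδpos'.le⟩ 0 ⟨le_refl 0, by linarith⟩
    simpa using this
  have hΨne : ∀ q ∈ quadrant, q ≠ ((1 : ℝ), (0 : ℝ)) → Ψ q ≠ ((1 : ℝ), (0 : ℝ)) := by
    intro q hq hqne h
    exact hqne (by rw [← hΦΨ q hq, h, hΦc])
  have hΨne' : ∀ q ∈ quadrant, q ≠ ((1 : ℝ), (0 : ℝ)) → Ψ' q ≠ ((1 : ℝ), (0 : ℝ)) := by
    intro q hq hqne h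
    exact hqne (by rw [← hΦΨ' q hq, h, hΦc'])
  have hsubΨ : quadrant \ {((1 : ℝ), (0 : ℝ))} ⊆ Ψ ⁻¹' (strip \ {((1 : ℝ), (0 : ℝ))}) := by
    rintro q ⟨hq, hqne⟩
    simp only [mem_singleton_iff] at hqne
    refine ⟨hΨmaps hq, ?_⟩
    simp only [mem_singleton_iff]
    exact hΨne q hq hqne
  have hsubΨ' : quadrant \ {((1 : ℝ), (0 : ℝ))} ⊆ Ψ' ⁻¹' (strip \ {((1 : ℝ), (0 : ℝ))}) := by
    rintro q ⟨hq, hqne⟩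
    simp only [mem_singleton_iff] at hqne
    refine ⟨hΨmaps' hq, ?_⟩
    simp only [mem_singleton_iff]
    exact hΨne' q hq hqne
  refine ⟨(hbij'.comp hΨbij).congr hHeq.symm,
    (hcont'.comp hΨcont hΨmaps).congr hHeq, ?_, ?_, ?_, ?_⟩
  · -- inverse K
    refine ⟨fun q => Φ (Ψ' q), ⟨?_, ?_⟩, hcont.comp hΨcont' hΨmaps',
      hsm.comp hΨsm' hsubΨ'⟩
    · intro q hq
      show Φ (Ψ' (H q)) = q
      rw [hHeq hq]
      show Φ (Ψ' (Φ' (Ψ q))) = q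
      rw [hΨΦ' _ (hΨmaps hq), hΦΨ q hq]
    · intro q hq
      show H (Φ (Ψ' q)) = q
      rw [hH _ (hΨmaps' hq), hΦΨ' q hq]
  · exact (hsm'.comp hΨsm hsubΨ).congr (fun q hq => hHeq hq.1)
  · -- boundary
    rintro ⟨x, y⟩ hp
    rcases hp with ⟨hx, hy⟩ | ⟨hx, hy⟩
    · have hx0 : x = 0 := hx
      subst hx0
      have hy' : (0 : ℝ) ≤ y := hy
      have hstripp : ((0 : ℝ), y) ∈ strip := ⟨⟨le_refl 0, zero_le_one⟩, hy'⟩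
      have h1 : Φ (0, y) = (0, y) := hUid _ ⟨hUsub (Or.inl ⟨rfl, hy'⟩), hstripp⟩
      have h2 : Φ' (0, y) = (0, y) := hUid' _ ⟨hUsub' (Or.inl ⟨rfl, hy'⟩), hstripp⟩
      calc H (0, y) = H (Φ (0, y)) := by rw [h1]
        _ = Φ' (0, y) := hH _ hstripp
        _ = (0, y) := h2
    · have hy0 : y = 0 := hy
      subst hy0
      have hx' : (0 : ℝ) ≤ x := hx
      rcases lt_trichotomy x 1 with hlt | heq | hgt
      · have hstripp : (x, (0 : ℝ)) ∈ strip := ⟨⟨hx', hlt.le⟩, self_mem_Ici⟩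
        have h1 : Φ (x, 0) = (x, 0) := hUid _ ⟨hUsub (Or.inr ⟨⟨hx', hlt⟩, rfl⟩), hstripp⟩
        have h2 : Φ' (x, 0) = (x, 0) := hUid' _ ⟨hUsub' (Or.inr ⟨⟨hx', hlt⟩, rfl⟩), hstripp⟩
        calc H (x, 0) = H (Φ (x, 0)) := by rw [h1]
          _ = Φ' (x, 0) := hH _ hstripp
          _ = (x, 0) := h2
      · subst heq
        calc H (1, 0) = H (Φ (1, 0)) := by rw [hΦc]
          _ = Φ' (1, 0) := hH _ hcornerstrip
          _ = (1, 0) := hΦc'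
      · have hstripp : ((1 : ℝ), x - 1) ∈ strip := ⟨⟨zero_le_one, le_refl 1⟩, by show (0:ℝ) ≤ x - 1; linarith⟩
        have hmemV : ((1 : ℝ), x - 1) ∈ {(1 : ℝ)} ×ˢ Ioi (0 : ℝ) := ⟨rfl, by simp; linarith⟩
        have h1 : Φ (1, x - 1) = (x, 0) := by
          rw [hVrot _ ⟨hVsub hmemV, hstripp⟩, Prod.mk.injEq]
          exact ⟨by ring, by ring⟩
        have h2 : Φ' (1, x - 1) = (x, 0) := by
          rw [hVrot' _ ⟨hVsub' hmemV, hstripp⟩, Prod.mk.injEq]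
          exact ⟨by ring, by ring⟩
        calc H (x, 0) = H (Φ (1, x - 1)) := by rw [h1]
          _ = Φ' (1, x - 1) := hH _ hstripp
          _ = (x, 0) := h2
  · -- corner behaviour
    obtain ⟨β, g, hβsm, hβd, hβid, hlink⟩ := exists_beta hα hα'
    refine ⟨min δ (min δ' 1), by positivity, β, hβsm, hβd, hβid, ?_⟩
    intro r hr φ hφ
    obtain ⟨hθmem, hαθ, hβφ⟩ := hlink φ hφ
    have hr1 : r ≤ 1 := le_trans hr.2 (le_trans (min_le_right _ _) (min_le_right _ _))
    have hrδ : r ∈ Icc (0 : ℝ) δ := ⟨hr.1, le_trans hr.2 (min_le_left _ _)⟩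
    have hrδ' : r ∈ Icc (0 : ℝ) δ' :=
      ⟨hr.1, le_trans hr.2 (le_trans (min_le_right _ _) (min_le_left _ _))⟩
    have hcos0 : 0 ≤ cos (g φ) :=
      Real.cos_nonneg_of_mem_Icc ⟨by linarith [hθmem.1], hθmem.2⟩
    have hsin0 : 0 ≤ sin (g φ) :=
      Real.sin_nonneg_of_nonneg_of_le_pi hθmem.1 (by linarith [hθmem.2])
    have hrcos : r * cos (g φ) ≤ 1 := by
      nlinarith [Real.cos_le_one (g φ), hr.1]
    have hstripp : (1 - r * cos (g φ), r * sin (g φ)) ∈ strip := by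
      have h0 : 0 ≤ r * cos (g φ) := mul_nonneg hr.1 hcos0
      refine ⟨⟨?_, ?_⟩, ?_⟩
      · show (0 : ℝ) ≤ 1 - r * cos (g φ)
        linarith
      · show 1 - r * cos (g φ) ≤ 1
        linarith
      · show (0 : ℝ) ≤ r * sin (g φ)
        exact mul_nonneg hr.1 hsin0
    have h1 := hδ r hrδ (g φ) hθmem
    have h2 := hδ' r hrδ' (g φ) hθmem
    rw [hαθ] at h1
    calc H (1 - r * cos φ, r * sin φ)
        = H (Φ (1 - r * cos (g φ), r * sin (g φ))) := by rw [h1]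
      _ = Φ' (1 - r * cos (g φ), r * sin (g φ)) := hH _ hstripp
      _ = (1 - r * cos (α' (g φ)), r * sin (α' (g φ))) := h2
      _ = (1 - r * cos (β φ), r * sin (β φ)) := by rw [hβφ]
end
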